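/- arXiv:2003.02962 — 12 statements merged into one kernel-verified Lean document; each statement's English description precedes it below -/
import Mathlib

section
/- Let A_1,...,A_ℓ be N×N real matrices and T the cpo T(X) = Σ_i A_i X A_i^T. If T is rank-decreasing (there is a positive semi-definite Y with rank T(Y) < rank Y), then there exists a shrunk subspace for {A_1,...,A_ℓ}, i.e. a subspace U ≤ ℝ^N with dim U > dim(Σ_{i=1}^ℓ A_i(U)). -/
open Matrix BigOperators

-- range of block concatenation = sup of ranges
lemma range_block {N n ℓ : ℕ} (C : Fin ℓ → Matrix (Fin N) (Fin n) ℝ) :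
    LinearMap.range (Matrix.mulVecLin (Matrix.of fun k (p : Fin ℓ × Fin n) => C p.1 k p.2)) =
      ⨆ i, LinearMap.range (C i).mulVecLin := by
  apply le_antisymm
  · rintro _ ⟨x, rfl⟩
    have : (Matrix.of fun k (p : Fin ℓ × Fin n) => C p.1 k p.2).mulVecLin x
        = ∑ i, (C i).mulVecLin (fun j => x (i, j)) := by
      funext k
      simp [Matrix.mulVecLin, Matrix.mulVec, dotProduct, Fintype.sum_prod_type,
        Finset.sum_apply]
    rw [this]
    exact Submodule.sum_mem _ fun i _ =>
      Submodule.mem_iSup_of_mem i (LinearMap.mem_range_self _ _)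
  · refine iSup_le fun i => ?_
    rintro _ ⟨y, rfl⟩
    refine ⟨fun p => if p.1 = i then y p.2 else 0, ?_⟩
    funext k
    simp only [Matrix.mulVecLin_apply, Matrix.mulVec, dotProduct,
      Fintype.sum_prod_type, Matrix.of_apply]
    rw [Finset.sum_eq_single i]
    · simp
    · intro b _ hb
      simp [hb]
    · simp

theorem stmt1 {N ℓ : ℕ} (A : Fin ℓ → Matrix (Fin N) (Fin N) ℝ)
    (h : ∃ Y : Matrix (Fin N) (Fin N) ℝ, Y.PosSemidef ∧
      (∑ i, A i * Y * (A i)ᵀ).rank < Y.rank) :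
    ∃ U : Submodule ℝ (Fin N → ℝ),
      Module.finrank ℝ (⨆ i, U.map (A i).mulVecLin : Submodule ℝ (Fin N → ℝ)) <
        Module.finrank ℝ U := by
  obtain ⟨Y, hY, hrank⟩ := h
  obtain ⟨S, hSsa, -, hSS⟩ := open scoped MatrixOrder in CFC.exists_sqrt_of_isSelfAdjoint_of_quasispectrumRestricts
    hY.isHermitian (QuasispectrumRestricts.nnreal_of_nonneg (Matrix.nonneg_iff_posSemidef.mpr hY))
  have hSt : Sᵀ = S := by
    have : S.IsHermitian := hSsa
    rwa [Matrix.IsHermitian, Matrix.conjTranspose_eq_transpose_of_trivial] at this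
  refine ⟨LinearMap.range S.mulVecLin, ?_⟩
  -- finrank U = rank Y
  have hU : Module.finrank ℝ (LinearMap.range S.mulVecLin) = Y.rank := by
    have : (Sᵀ * S).rank = S.rank := Matrix.rank_transpose_mul_self S
    rw [hSt, hSS] at this
    rw [this]
    rfl
  -- maps
  have hmap : ∀ i, (LinearMap.range S.mulVecLin).map (A i).mulVecLin
      = LinearMap.range (A i * S).mulVecLin := by
    intro i
    rw [Matrix.mulVecLin_mul, LinearMap.range_comp]
  set B : Matrix (Fin N) (Fin ℓ × Fin N) ℝ :=
    Matrix.of fun k (p : Fin ℓ × Fin N) => (A p.1 * S) k p.2 with hB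
  have hBBt : B * Bᵀ = ∑ i, A i * Y * (A i)ᵀ := by
    have h2 : B * Bᵀ = ∑ i, (A i * S) * (A i * S)ᵀ := by
      ext k l
      simp only [Matrix.mul_apply, Matrix.transpose_apply, Matrix.sum_apply, hB,
        Fintype.sum_prod_type, Matrix.of_apply]
    rw [h2]
    refine Finset.sum_congr rfl fun i _ => ?_
    rw [Matrix.transpose_mul, hSt, ← hSS]
    noncomm_ring
  have hsup : (⨆ i, (LinearMap.range S.mulVecLin).map (A i).mulVecLin)
      = LinearMap.range B.mulVecLin := by
    rw [range_block (fun i => A i * S)]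
    exact iSup_congr hmap
  rw [hsup, hU]
  have h1 : Module.finrank ℝ (LinearMap.range B.mulVecLin) = B.rank := rfl
  rw [h1]
  calc B.rank = (B * Bᵀ).rank := (Matrix.rank_self_mul_transpose B).symm
    _ = (∑ i, A i * Y * (A i)ᵀ).rank := by rw [hBBt]
    _ < Y.rank := hrank
end

section
/- Let A_1,...,A_ℓ be N×N real matrices and T the cpo T(X) = Σ_i A_i X A_i^T. If U ≤ ℝ^N is a shrunk subspace for {A_1,...,A_ℓ} and Y is the matrix of orthogonal projection onto U, then Y is a rank-decreasing witness for T, i.e. rank(T(Y)) < rank(Y). Moreover rank(Y) − rank(T(Y)) ≥ dim U − dim(Σ_i A_i(U)). -/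
open Matrix BigOperators

theorem stmt2 {N ℓ : ℕ} (A : Fin ℓ → Matrix (Fin N) (Fin N) ℝ)
    (U : Submodule ℝ (Fin N → ℝ))
    (hshrunk : Module.finrank ℝ (⨆ i, U.map (A i).mulVecLin : Submodule ℝ (Fin N → ℝ)) <
      Module.finrank ℝ U)
    (Y : Matrix (Fin N) (Fin N) ℝ)
    (hsym : Yᵀ = Y) (hidem : Y * Y = Y)
    (hrange : LinearMap.range Y.mulVecLin = U) :
    (∑ i, A i * Y * (A i)ᵀ).rank < Y.rank ∧
    Module.finrank ℝ U -
        Module.finrank ℝ (⨆ i, U.map (A i).mulVecLin : Submodule ℝ (Fin N → ℝ)) ≤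
      Y.rank - (∑ i, A i * Y * (A i)ᵀ).rank := by
  have hYrank : Y.rank = Module.finrank ℝ U := by
    rw [Matrix.rank, hrange]
  have hsub : LinearMap.range (∑ i, A i * Y * (A i)ᵀ).mulVecLin ≤
      (⨆ i, U.map (A i).mulVecLin : Submodule ℝ (Fin N → ℝ)) := by
    rintro x ⟨v, rfl⟩
    have : (∑ i, A i * Y * (A i)ᵀ).mulVecLin v
        = ∑ i, (A i * Y * (A i)ᵀ).mulVecLin v := by
      induction (Finset.univ : Finset (Fin ℓ)) using Finset.induction with
      | empty => simp [Matrix.mulVecLin_apply]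
      | insert _ _ h ih =>
          simp only [Finset.sum_insert h, Matrix.mulVecLin_add,
            LinearMap.add_apply, ih]
    rw [this]
    apply Submodule.sum_mem
    intro i _
    apply Submodule.mem_iSup_of_mem i
    have : (A i * Y * (A i)ᵀ).mulVecLin v
        = (A i).mulVecLin ((Y * (A i)ᵀ).mulVecLin v) := by
      rw [mul_assoc, Matrix.mulVecLin_mul]; rfl
    rw [this]
    refine ⟨(Y * (A i)ᵀ).mulVecLin v, ?_, rfl⟩
    rw [← hrange, Matrix.mulVecLin_mul]
    exact ⟨(A i)ᵀ.mulVecLin v, rfl⟩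
  have hTrank : (∑ i, A i * Y * (A i)ᵀ).rank ≤
      Module.finrank ℝ (⨆ i, U.map (A i).mulVecLin : Submodule ℝ (Fin N → ℝ)) := by
    exact Submodule.finrank_mono hsub
  constructor
  · omega
  · omega
end

section
/- Let A_1,...,A_ℓ ∈ ℝ^{N×N}, B ∈ ℝ^{N×N}, and let W* be the limit of the second Wong sequence W_0 = 0, W_k = Σ_i A_i(B^{-1}(W_{k-1})). If W* ≤ Im B, then U := B^{-1}(W*) satisfies dim U − dim(Σ_{i=1}^ℓ A_i(U)) ≥ corank(B) = N − rank(B), i.e. U is a corank(B)-shrunk subspace for {A_1,...,A_ℓ}. -/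
open Matrix BigOperators

set_option synthInstance.maxHeartbeats 1000000
set_option maxHeartbeats 1000000

theorem stmt5 {N ℓ : ℕ} (A : Fin ℓ → Matrix (Fin N) (Fin N) ℝ)
    (B : Matrix (Fin N) (Fin N) ℝ)
    (W : ℕ → Submodule ℝ (Fin N → ℝ)) (hW0 : W 0 = ⊥)
    (hW : ∀ k, W (k + 1) = ⨆ i, ((W k).comap B.mulVecLin).map (A i).mulVecLin)
    (hstab : W (N + 1) = W N)
    (hIm : W N ≤ LinearMap.range B.mulVecLin) :
    Module.finrank ℝ
        (⨆ i, ((W N).comap B.mulVecLin).map (A i).mulVecLin : Submodule ℝ (Fin N → ℝ)) +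
      (N - B.rank) ≤
      Module.finrank ℝ ((W N).comap B.mulVecLin) := by
  have hsup : (⨆ i, ((W N).comap B.mulVecLin).map (A i).mulVecLin : Submodule ℝ (Fin N → ℝ))
      = W N := by rw [← hW N, hstab]
  rw [hsup]
  set f := B.mulVecLin with hf
  set U := (W N).comap f with hU
  -- rank-nullity for f restricted to U
  have h1 : Module.finrank ℝ (LinearMap.range (f.domRestrict U))
      + Module.finrank ℝ (LinearMap.ker (f.domRestrict U)) = Module.finrank ℝ U :=
    LinearMap.finrank_range_add_finrank_ker _
  have hrange : LinearMap.range (f.domRestrict U) = W N := by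
    rw [LinearMap.range_domRestrict, hU, Submodule.map_comap_eq, inf_eq_right.mpr hIm]
  have hkerle : LinearMap.ker f ≤ U := by
    intro x hx
    simp only [hU, Submodule.mem_comap, LinearMap.mem_ker.mp hx]
    exact (W N).zero_mem
  have hker : Module.finrank ℝ (LinearMap.ker (f.domRestrict U))
      = Module.finrank ℝ (LinearMap.ker f) := by
    rw [LinearMap.ker_domRestrict]
    exact (Submodule.comapSubtypeEquivOfLe hkerle).finrank_eq
  have hrk : B.rank + Module.finrank ℝ (LinearMap.ker f) = N := by
    have := LinearMap.finrank_range_add_finrank_ker f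
    rwa [Module.finrank_fin_fun] at this
  have hle : N - B.rank = Module.finrank ℝ (LinearMap.ker f) := by omega
  rw [hrange, hker] at h1
  omega
end

section
/- Let Q be the n-subspace quiver S_n (n source vertices x_1,...,x_n, one sink y_1, arrows a_i : x_i → y_1), let v_1,...,v_n ∈ ℝ^D, and let V be the representation with V(x_i) = ℝ, V(y_1) = ℝ^D, V(a_i) = v_i. Let σ_0 = (D,...,D,−n). Then for every subrepresentation W ≤ V, setting T = W(y_1), one has σ_0 · dim W ≤ σ_0 · dim W_T, where W_T is the subrepresentation with W_T(x_i) = ℝ if v_i ∈ T and 0 otherwise, and W_T(y_1) = T. Consequently V is σ_0-semi-stable if and only if for every subspace T ≤ ℝ^D, |{i : v_i ∈ T}| ≤ (dim T / D) · n. -/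
open Matrix BigOperators
open scoped Classical

theorem stmt9 {n D : ℕ} (hD : 0 < D) (v : Fin n → (Fin D → ℝ)) :
    (∀ (Wx : Fin n → Submodule ℝ ℝ) (T : Submodule ℝ (Fin D → ℝ)),
        (∀ i, (Wx i).map (LinearMap.toSpanSingleton ℝ (Fin D → ℝ) (v i)) ≤ T) →
        (D : ℤ) * (∑ i, (Module.finrank ℝ (Wx i) : ℤ)) - n * Module.finrank ℝ T ≤
          (D : ℤ) * ((Finset.univ.filter fun i => v i ∈ T).card : ℤ) -
            n * Module.finrank ℝ T) ∧
    ((∀ (Wx : Fin n → Submodule ℝ ℝ) (T : Submodule ℝ (Fin D → ℝ)),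
        (∀ i, (Wx i).map (LinearMap.toSpanSingleton ℝ (Fin D → ℝ) (v i)) ≤ T) →
        (D : ℤ) * (∑ i, (Module.finrank ℝ (Wx i) : ℤ)) - n * Module.finrank ℝ T ≤ 0) ↔
      ∀ T : Submodule ℝ (Fin D → ℝ),
        ((Finset.univ.filter fun i => v i ∈ T).card : ℝ) ≤
          ((Module.finrank ℝ T : ℝ) / D) * n) := by
  have key : ∀ (Wx : Fin n → Submodule ℝ ℝ) (T : Submodule ℝ (Fin D → ℝ)),
      (∀ i, (Wx i).map (LinearMap.toSpanSingleton ℝ (Fin D → ℝ) (v i)) ≤ T) →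
      (∑ i, (Module.finrank ℝ (Wx i) : ℤ)) ≤
        ((Finset.univ.filter fun i => v i ∈ T).card : ℤ) := by
    intro Wx T hW
    have hbound : ∀ i, (Module.finrank ℝ (Wx i) : ℤ) ≤ if v i ∈ T then 1 else 0 := by
      intro i
      by_cases h : Wx i = ⊥
      · have h0 : Module.finrank ℝ (Wx i) = 0 := by rw [h]; exact finrank_bot ℝ ℝ
        rw [h0]; split_ifs <;> norm_num
      · obtain ⟨c, hc, hc0⟩ := Submodule.exists_mem_ne_zero_of_ne_bot h
        have hvT : v i ∈ T := by
          have : c • v i ∈ T := hW i ⟨c, hc, rfl⟩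
          have := T.smul_mem c⁻¹ this
          rwa [smul_smul, inv_mul_cancel₀ hc0, one_smul] at this
        have h1 : Module.finrank ℝ (Wx i) ≤ 1 := by
          simpa using Submodule.finrank_le (Wx i)
        rw [if_pos hvT]
        exact_mod_cast h1
    calc (∑ i, (Module.finrank ℝ (Wx i) : ℤ))
        ≤ ∑ i, if v i ∈ T then (1:ℤ) else 0 := Finset.sum_le_sum fun i _ => hbound i
      _ = ((Finset.univ.filter fun i => v i ∈ T).card : ℤ) := by
          rw [Finset.card_filter]; push_cast; rfl
  constructor
  · intro Wx T hW
    have := key Wx T hW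
    have hDpos : (0:ℤ) < D := by exact_mod_cast hD
    nlinarith
  · constructor
    · intro h T
      set Wx : Fin n → Submodule ℝ ℝ := fun i => if v i ∈ T then ⊤ else ⊥ with hWx
      have hW : ∀ i, (Wx i).map (LinearMap.toSpanSingleton ℝ (Fin D → ℝ) (v i)) ≤ T := by
        intro i
        by_cases hv : v i ∈ T
        · simp only [hWx, hv, if_pos]
          rintro x ⟨c, -, rfl⟩
          exact T.smul_mem c hv
        · simp [hWx, hv]
      have hsum : (∑ i, (Module.finrank ℝ (Wx i) : ℤ)) =
          ((Finset.univ.filter fun i => v i ∈ T).card : ℤ) := by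
        rw [Finset.card_filter]; push_cast
        apply Finset.sum_congr rfl
        intro i _
        by_cases hv : v i ∈ T
        · have ht : Wx i = ⊤ := by simp [hWx, hv]
          rw [ht, finrank_top, Module.finrank_self]; simp [hv]
        · have hb : Wx i = ⊥ := by simp [hWx, hv]
          simp [hb, hv, finrank_bot]
      have := h Wx T hW
      rw [hsum] at this
      have hDpos : (0:ℝ) < D := by exact_mod_cast hD
      rw [div_mul_eq_mul_div, le_div_iff₀ hDpos]
      have h' : (D:ℤ) * ((Finset.univ.filter fun i => v i ∈ T).card : ℤ)
          ≤ n * Module.finrank ℝ T := by linarith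
      have hR : (D:ℝ) * ((Finset.univ.filter fun i => v i ∈ T).card : ℝ)
          ≤ n * Module.finrank ℝ T := by exact_mod_cast h'
      linarith
    · intro h Wx T hW
      have h1 := key Wx T hW
      have h2 := h T
      have hDpos : (0:ℝ) < D := by exact_mod_cast hD
      rw [div_mul_eq_mul_div, le_div_iff₀ hDpos] at h2
      have h3n : (Finset.univ.filter fun i => v i ∈ T).card * D
          ≤ Module.finrank ℝ T * n := by exact_mod_cast h2
      have h3 : ((Finset.univ.filter fun i => v i ∈ T).card : ℤ) * D
          ≤ (Module.finrank ℝ T : ℤ) * n := by exact_mod_cast h3n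
      have hDpos' : (0:ℤ) < D := by exact_mod_cast hD
      nlinarith [mul_le_mul_of_nonneg_left h1 hDpos'.le]
end

section
/- Let K_{n,m} be the complete bipartite quiver with sources x_1,...,x_n and sinks y_1,...,y_m, and let V_X be the representation given by vectors v_i^j ∈ ℝ^{d_j} on the arrow x_i → y_j, with V_X(x_i) = ℝ and V_X(y_j) = ℝ^{d_j}. Set D = Σ_j d_j and σ_0(x_i) = D, σ_0(y_j) = −n. Then V_X is σ_0-semi-stable if and only if for every m-tuple of subspaces (T_1,...,T_m) with T_j ≤ ℝ^{d_j}: D·|{i ∈ [n] : v_i^j ∈ T_j for all j}| ≤ n·(Σ_{j=1}^m dim T_j). -/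
open Matrix BigOperators
open scoped Classical

theorem stmt10 {n m : ℕ} (d : Fin m → ℕ)
    (v : ∀ (_ : Fin n) (j : Fin m), Fin (d j) → ℝ)
    (D : ℕ) (hD : D = ∑ j, d j) :
    (∀ (Wx : Fin n → Submodule ℝ ℝ) (Wy : ∀ j, Submodule ℝ (Fin (d j) → ℝ)),
        (∀ i j, (Wx i).map (LinearMap.toSpanSingleton ℝ (Fin (d j) → ℝ) (v i j)) ≤ Wy j) →
        (D : ℤ) * (∑ i, (Module.finrank ℝ (Wx i) : ℤ)) -
            n * (∑ j, (Module.finrank ℝ (Wy j) : ℤ)) ≤ 0) ↔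
      ∀ T : ∀ j : Fin m, Submodule ℝ (Fin (d j) → ℝ),
        D * (Finset.univ.filter fun i : Fin n => ∀ j, v i j ∈ T j).card ≤
          n * ∑ j, Module.finrank ℝ (T j) := by
  constructor
  · intro h T
    set Wx : Fin n → Submodule ℝ ℝ :=
      fun i => if ∀ j, v i j ∈ T j then ⊤ else ⊥ with hWx
    have hcomp : ∀ i j,
        (Wx i).map (LinearMap.toSpanSingleton ℝ (Fin (d j) → ℝ) (v i j)) ≤ T j := by
      intro i j x hx
      rcases hx with ⟨c, hc, rfl⟩
      by_cases hP : ∀ j, v i j ∈ T j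
      · exact Submodule.smul_mem _ c (hP j)
      · simp only [hWx, hP, if_false] at hc
        simp only [Submodule.bot_coe, Set.mem_singleton_iff] at hc
        simp [hc]
    have key := h Wx T hcomp
    have hsum : ∑ i, (Module.finrank ℝ (Wx i) : ℤ) =
        ((Finset.univ.filter fun i : Fin n => ∀ j, v i j ∈ T j).card : ℤ) := by
      rw [Finset.card_filter]
      push_cast
      apply Finset.sum_congr rfl
      intro i _
      by_cases hP : ∀ j, v i j ∈ T j
      · rw [show Wx i = ⊤ from by simp [hWx, hP], finrank_top, Module.finrank_self, if_pos hP]; norm_num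
      · rw [show Wx i = ⊥ from by simp [hWx, hP], finrank_bot, if_neg hP]; norm_num
    rw [hsum, sub_nonpos] at key
    exact_mod_cast key
  · intro h Wx Wy hcomp
    have hle : ∑ i, (Module.finrank ℝ (Wx i) : ℤ) ≤
        ((Finset.univ.filter fun i : Fin n => ∀ j, v i j ∈ Wy j).card : ℤ) := by
      rw [Finset.card_filter]
      push_cast
      apply Finset.sum_le_sum
      intro i _
      rcases Ideal.eq_bot_or_top (Wx i) with hb | ht
      · rw [hb]
        split <;> simp
      · have hmem : ∀ j, v i j ∈ Wy j := by
          intro j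
          apply hcomp i j
          exact ⟨1, ht ▸ Submodule.mem_top, by simp⟩
        rw [ht, finrank_top, Module.finrank_self]
        simp [hmem]
    have key := h Wy
    have key' : (D : ℤ) * ((Finset.univ.filter fun i : Fin n => ∀ j, v i j ∈ Wy j).card : ℤ)
        ≤ n * ∑ j, (Module.finrank ℝ (Wy j) : ℤ) := by exact_mod_cast key
    have := mul_le_mul_of_nonneg_left hle (by positivity : (0:ℤ) ≤ D)
    omega
end

section
/- With data v_i^j ∈ ℝ^{d_j} (i ∈ [n], j ∈ [m]), D = Σ_j d_j, N = nD: let Y be an N×N positive semi-definite rank-decreasing witness for the cpo T_X associated to the data, with diagonal entries y_{r,r}. Set I = {i ∈ [n] : y_{r,r} ≠ 0 for some r ∈ ((i−1)D, iD]}, and define the subrepresentation W of V_X by W(x_i) = ℝ if i ∈ I and 0 otherwise, and W(y_j) = Span(v_i^j : i ∈ I). Then σ_0 · dim W ≥ rank(Y) − rank(T_X(Y)) > 0. -/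
open Matrix BigOperators
open scoped Classical

/-- Row index type for the SRSR Kraus operators: block `(j, q)` of height `d j`,
with `q` ranging over `n` slots per sink `j`. -/
abbrev SrsrRow (n m : ℕ) (d : Fin m → ℕ) := Σ j : Fin m, Fin n × Fin (d j)

/-- Column index type: `n` blocks of width `D`. -/
abbrev SrsrCol (n D : ℕ) := Fin n × Fin D

/-- The Kraus operator `V^{i,j}_{q,r}`: block matrix whose `((j,q),(i,r))`-block is the
column vector `v i j` and all other entries vanish. -/
noncomputable def srsrKraus {n m D : ℕ} (d : Fin m → ℕ)
    (v : ∀ (_ : Fin n) (j : Fin m), Fin (d j) → ℝ)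
    (i : Fin n) (j : Fin m) (q : Fin n) (r : Fin D) :
    Matrix (SrsrRow n m d) (SrsrCol n D) ℝ :=
  fun p c =>
    if h : p.1 = j ∧ p.2.1 = q ∧ c.1 = i ∧ c.2 = r then
      v i j (Fin.cast (congrArg d h.1) p.2.2)
    else 0

/-- The completely positive operator `T_X` associated to the partitioned data set. -/
noncomputable def srsrCPO {n m D : ℕ} (d : Fin m → ℕ)
    (v : ∀ (_ : Fin n) (j : Fin m), Fin (d j) → ℝ)
    (Y : Matrix (SrsrCol n D) (SrsrCol n D) ℝ) :
    Matrix (SrsrRow n m d) (SrsrRow n m d) ℝ :=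
  ∑ i : Fin n, ∑ j : Fin m, ∑ q : Fin n, ∑ r : Fin D,
    srsrKraus d v i j q r * Y * (srsrKraus d v i j q r)ᵀ

lemma finrank_pi_submodule {ι : Type*} [Fintype ι] {φ : ι → Type*}
    [∀ i, AddCommGroup (φ i)] [∀ i, Module ℝ (φ i)] [∀ i, FiniteDimensional ℝ (φ i)]
    (p : ∀ i, Submodule ℝ (φ i)) :
    Module.finrank ℝ (Submodule.pi Set.univ p) = ∑ i, Module.finrank ℝ (p i) := by
  classical
  let f : (∀ i, p i) →ₗ[ℝ] (∀ i, φ i) :=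
    LinearMap.pi fun i => (p i).subtype.comp (LinearMap.proj i)
  have hinj : Function.Injective f := by
    intro x y h
    funext i
    exact Subtype.ext (congrFun h i)
  have hrange : LinearMap.range f = Submodule.pi Set.univ p := by
    ext g
    constructor
    · rintro ⟨x, rfl⟩ i _
      exact (x i).2
    · intro hg
      exact ⟨fun i => ⟨g i, hg i (Set.mem_univ i)⟩, rfl⟩
  have h1 : Module.finrank ℝ (∀ i, p i) = Module.finrank ℝ (Submodule.pi Set.univ p) := by
    rw [← hrange]
    exact (LinearEquiv.ofInjective f hinj).finrank_eq
  rw [← h1, Module.finrank_pi_fintype]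

theorem stmt12 {n m D : ℕ} (d : Fin m → ℕ) (hD : D = ∑ j, d j)
    (v : ∀ (_ : Fin n) (j : Fin m), Fin (d j) → ℝ)
    (Y : Matrix (SrsrCol n D) (SrsrCol n D) ℝ) (hpsd : Y.PosSemidef)
    (hwit : (srsrCPO d v Y).rank < Y.rank)
    (I : Finset (Fin n))
    (hI : I = Finset.univ.filter fun i => ∃ r : Fin D, Y (i, r) (i, r) ≠ 0)
    (Wy : ∀ j : Fin m, Submodule ℝ (Fin (d j) → ℝ))
    (hWy : ∀ j, Wy j = Submodule.span ℝ {x | ∃ i ∈ I, x = v i j}) :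
    ((Y.rank : ℤ) - (srsrCPO d v Y).rank ≤
        (D : ℤ) * I.card - n * (∑ j, (Module.finrank ℝ (Wy j) : ℤ))) ∧
      0 < (D : ℤ) * I.card - n * (∑ j, (Module.finrank ℝ (Wy j) : ℤ)) := by
  -- diagonal sums
  set s : Fin n → ℝ := fun i => ∑ r : Fin D, Y (i, r) (i, r) with hs
  obtain ⟨B, hB⟩ : ∃ B : Matrix (SrsrCol n D) (SrsrCol n D) ℝ, Y = Bᴴ * B := by
    open scoped MatrixOrder Matrix.Norms.L2Operator in
    obtain ⟨B, hB⟩ := CStarAlgebra.nonneg_iff_eq_star_mul_self.mp hpsd.nonneg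
    exact ⟨B, hB⟩
  have hdiag : ∀ c : SrsrCol n D, Y c c = ∑ e : SrsrCol n D, B e c * B e c := by
    intro c
    rw [hB]
    simp [Matrix.mul_apply, Matrix.conjTranspose_apply]
  have hdiag_nonneg : ∀ c, 0 ≤ Y c c := fun c => by
    rw [hdiag]
    exact Finset.sum_nonneg fun e _ => mul_self_nonneg _
  have hs_nonneg : ∀ i, 0 ≤ s i := fun i =>
    Finset.sum_nonneg fun r _ => hdiag_nonneg _
  have hs_pos : ∀ i ∈ I, 0 < s i := by
    intro i hi
    rw [hI, Finset.mem_filter] at hi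
    obtain ⟨r, hr⟩ := hi.2
    have h1 : 0 < Y (i, r) (i, r) := lt_of_le_of_ne (hdiag_nonneg _) (Ne.symm hr)
    exact lt_of_lt_of_le h1
      (Finset.single_le_sum (fun r _ => hdiag_nonneg (i, r)) (Finset.mem_univ r))
  -- Upper bound: rank Y ≤ |I| * D
  have hYrank : Y.rank ≤ I.card * D := by
    have hcolzero : ∀ i : Fin n, i ∉ I → ∀ r : Fin D, Bᵀ (i, r) = 0 := by
      intro i hi r
      have hYz : Y (i, r) (i, r) = 0 := by
        rw [hI] at hi
        simp only [Finset.mem_filter, Finset.mem_univ, true_and, not_exists, not_not] at hi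
        exact hi r
      funext e
      have h0 : ∑ e : SrsrCol n D, B e (i, r) * B e (i, r) = 0 := by
        rw [← hdiag]; exact hYz
      have h1 := (Finset.sum_eq_zero_iff_of_nonneg
        (fun e _ => mul_self_nonneg (B e (i, r)))).mp h0 e (Finset.mem_univ e)
      have h2 := mul_self_eq_zero.mp h1
      simpa using h2
    have h1 : Y.rank = B.rank := by rw [hB, Matrix.rank_conjTranspose_mul_self]
    rw [h1, Matrix.rank_eq_finrank_span_cols]
    set S : Finset (SrsrCol n D) := I ×ˢ Finset.univ with hS
    have hsub : Set.range Bᵀ ⊆ insert 0 (↑(S.image fun c => Bᵀ c) : Set (SrsrCol n D → ℝ)) := by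
      rintro _ ⟨⟨i, r⟩, rfl⟩
      by_cases hi : i ∈ I
      · refine Set.mem_insert_of_mem _ ?_
        rw [Finset.coe_image]
        exact ⟨(i, r), by simp [hS, hi], rfl⟩
      · rw [hcolzero i hi r]
        exact Set.mem_insert _ _
    calc Module.finrank ℝ (Submodule.span ℝ (Set.range Bᵀ))
        ≤ Module.finrank ℝ (Submodule.span ℝ
            (insert 0 (↑(S.image fun c => Bᵀ c) : Set (SrsrCol n D → ℝ)))) :=
          Submodule.finrank_mono (Submodule.span_mono hsub)
      _ = Module.finrank ℝ (Submodule.span ℝ (↑(S.image fun c => Bᵀ c) : Set (SrsrCol n D → ℝ))) := by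
          rw [Submodule.span_insert_zero]
      _ ≤ (S.image fun c => Bᵀ c).card := finrank_span_finset_le_card _
      _ ≤ S.card := Finset.card_image_le
      _ = I.card * D := by simp [hS]
  -- the row vectors w
  set w : Fin n → Fin m → Fin n → (SrsrRow n m d → ℝ) := fun i j q p =>
    if h : p.1 = j ∧ p.2.1 = q then v i j (Fin.cast (congrArg d h.1) p.2.2) else 0 with hw
  set A : Matrix (Fin n × Fin m × Fin n) (SrsrRow n m d) ℝ :=
    fun t => Real.sqrt (s t.1) • w t.1 t.2.1 t.2.2 with hA
  have hK : ∀ (i : Fin n) (j : Fin m) (q : Fin n) (r : Fin D) (p : SrsrRow n m d)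
      (c : SrsrCol n D),
      srsrKraus d v i j q r p c = w i j q p * (if c = (i, r) then 1 else 0) := by
    intro i j q r p c
    simp only [srsrKraus]
    by_cases h1 : p.1 = j ∧ p.2.1 = q
    · by_cases h2 : c = (i, r)
      · have h3 : p.1 = j ∧ p.2.1 = q ∧ c.1 = i ∧ c.2 = r :=
          ⟨h1.1, h1.2, by rw [h2], by rw [h2]⟩
        rw [dif_pos h3, if_pos h2, mul_one, hw]
        simp only []
        rw [dif_pos h1]
      · have h3 : ¬(p.1 = j ∧ p.2.1 = q ∧ c.1 = i ∧ c.2 = r) := by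
          rintro ⟨-, -, hc1, hc2⟩
          exact h2 (Prod.ext hc1 hc2)
        rw [dif_neg h3, if_neg h2, mul_zero]
    · have h3 : ¬(p.1 = j ∧ p.2.1 = q ∧ c.1 = i ∧ c.2 = r) := fun hh => h1 ⟨hh.1, hh.2.1⟩
      rw [dif_neg h3, hw]
      simp only []
      rw [dif_neg h1, zero_mul]
  have hterm : ∀ (i : Fin n) (j : Fin m) (q : Fin n) (r : Fin D) (p p' : SrsrRow n m d),
      (srsrKraus d v i j q r * Y * (srsrKraus d v i j q r)ᵀ) p p'
        = w i j q p * Y (i, r) (i, r) * w i j q p' := by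
    intro i j q r p p'
    have h1 : ∀ c', (srsrKraus d v i j q r * Y) p c' = w i j q p * Y (i, r) c' := by
      intro c'
      rw [Matrix.mul_apply]
      have hx : ∀ c, srsrKraus d v i j q r p c * Y c c'
          = if c = (i, r) then w i j q p * Y c c' else 0 := by
        intro c
        rw [hK]
        by_cases h : c = (i, r) <;> simp [h]
      simp only [hx]
      rw [Finset.sum_ite_eq' Finset.univ (i, r) fun c => w i j q p * Y c c']
      simp
    rw [Matrix.mul_apply]
    have h2 : ∀ c', (srsrKraus d v i j q r * Y) p c' * (srsrKraus d v i j q r)ᵀ c' p'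
        = if c' = (i, r) then w i j q p * Y (i, r) (i, r) * w i j q p' else 0 := by
      intro c'
      rw [Matrix.transpose_apply, h1, hK]
      by_cases h : c' = (i, r)
      · subst h
        rw [if_pos rfl, if_pos rfl, mul_one]
      · rw [if_neg h, if_neg h, mul_zero, mul_zero]
    simp only [h2]
    rw [Finset.sum_ite_eq' Finset.univ (i, r) fun c' => w i j q p * Y (i, r) (i, r) * w i j q p']
    simp
  have hcpoA : srsrCPO d v Y = Aᵀ * A := by
    funext p p'
    have hL : srsrCPO d v Y p p'
        = ∑ i : Fin n, ∑ j : Fin m, ∑ q : Fin n, ∑ r : Fin D,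
            w i j q p * Y (i, r) (i, r) * w i j q p' := by
      simp only [srsrCPO, Matrix.sum_apply, hterm]
    rw [hL, Matrix.mul_apply]
    simp only [Matrix.transpose_apply]
    rw [Fintype.sum_prod_type]
    refine Finset.sum_congr rfl fun i _ => ?_
    rw [Fintype.sum_prod_type]
    refine Finset.sum_congr rfl fun j _ => ?_
    refine Finset.sum_congr rfl fun q _ => ?_
    have hAe : ∀ p0, A (i, j, q) p0 = Real.sqrt (s i) * w i j q p0 := by
      intro p0
      simp [hA]
    rw [hAe, hAe]
    have hss : Real.sqrt (s i) * Real.sqrt (s i) = s i := Real.mul_self_sqrt (hs_nonneg i)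
    calc ∑ r : Fin D, w i j q p * Y (i, r) (i, r) * w i j q p'
        = (∑ r : Fin D, Y (i, r) (i, r)) * (w i j q p * w i j q p') := by
          rw [Finset.sum_mul]
          exact Finset.sum_congr rfl fun r _ => by ring
      _ = s i * (w i j q p * w i j q p') := by rw [show (∑ r : Fin D, Y (i, r) (i, r)) = s i from rfl]
      _ = Real.sqrt (s i) * Real.sqrt (s i) * (w i j q p * w i j q p') := by rw [hss]
      _ = Real.sqrt (s i) * w i j q p * (Real.sqrt (s i) * w i j q p') := by ring
  -- lower bound for rank of the CPO
  set U : Submodule ℝ (SrsrRow n m d → ℝ) := Submodule.span ℝ (Set.range A) with hU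
  have hwU : ∀ i ∈ I, ∀ (j : Fin m) (q : Fin n), w i j q ∈ U := by
    intro i hi j q
    have hAm : A (i, j, q) ∈ U := Submodule.subset_span ⟨(i, j, q), rfl⟩
    have hsqrt : Real.sqrt (s i) ≠ 0 := ne_of_gt (Real.sqrt_pos.mpr (hs_pos i hi))
    have heq : w i j q = (Real.sqrt (s i))⁻¹ • A (i, j, q) := by
      rw [hA]
      simp only []
      rw [smul_smul, inv_mul_cancel₀ hsqrt, one_smul]
    rw [heq]
    exact Submodule.smul_mem _ _ hAm
  set G : (∀ jq : Fin m × Fin n, Fin (d jq.1) → ℝ) →ₗ[ℝ] (SrsrRow n m d → ℝ) :=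
    { toFun := fun g p => g (p.1, p.2.1) p.2.2
      map_add' := fun g h => rfl
      map_smul' := fun c g => rfl } with hG
  have hGinj : Function.Injective G := by
    intro g h hgh
    funext jq a
    obtain ⟨j, q⟩ := jq
    exact congrFun hgh ⟨j, (q, a)⟩
  have hGsingle : ∀ (i : Fin n) (j : Fin m) (q : Fin n),
      G (Pi.single ((j, q) : Fin m × Fin n) (v i j)) = w i j q := by
    intro i j q
    funext p
    obtain ⟨j', q', a⟩ := p
    simp only [hG, LinearMap.coe_mk, AddHom.coe_mk]
    rw [hw]
    simp only []
    by_cases hj : j' = j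
    · subst hj
      by_cases hq : q' = q
      · subst hq
        rw [Pi.single_eq_same, dif_pos ⟨rfl, rfl⟩]
        exact congrArg (v i j') (Fin.val_injective rfl)
      · rw [Pi.single_eq_of_ne (by simp [hq]), dif_neg (by simp [hq])]
        rfl
    · rw [Pi.single_eq_of_ne (by simp [hj]), dif_neg (by simp [hj])]
      rfl
  set P : Submodule ℝ (∀ jq : Fin m × Fin n, Fin (d jq.1) → ℝ) :=
    Submodule.pi Set.univ (fun jq => Wy jq.1) with hP
  have hPU : ∀ g ∈ P, G g ∈ U := by
    intro g hg
    have hgd : g = ∑ jq : Fin m × Fin n, Pi.single jq (g jq) := (Finset.univ_sum_single g).symm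
    rw [hgd, map_sum]
    refine Submodule.sum_mem _ fun jq _ => ?_
    obtain ⟨j, q⟩ := jq
    have hgj : g (j, q) ∈ Wy j := hg (j, q) (Set.mem_univ _)
    rw [hWy j] at hgj
    have key : ∀ x ∈ Submodule.span ℝ {x | ∃ i ∈ I, x = v i j},
        G (Pi.single ((j, q) : Fin m × Fin n) x) ∈ U := by
      intro x hx
      induction hx using Submodule.span_induction with
      | mem y hy =>
          obtain ⟨i, hi, rfl⟩ := hy
          rw [hGsingle]
          exact hwU i hi j q
      | zero =>
          rw [Pi.single_zero, map_zero]
          exact Submodule.zero_mem _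
      | add y z _ _ hy hz =>
          rw [Pi.single_add, map_add]
          exact Submodule.add_mem _ hy hz
      | smul c y _ hy =>
          rw [Pi.single_smul, _root_.map_smul]
          exact Submodule.smul_mem _ _ hy
    exact key _ hgj
  have hmapPU : Submodule.map G P ≤ U := by
    rintro x ⟨g, hg, rfl⟩
    exact hPU g hg
  have hfinP : Module.finrank ℝ P = ∑ jq : Fin m × Fin n, Module.finrank ℝ (Wy jq.1) :=
    finrank_pi_submodule _
  have hPle : Module.finrank ℝ P ≤ Module.finrank ℝ U := by
    calc Module.finrank ℝ P = Module.finrank ℝ (Submodule.map G P) :=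
          (Submodule.equivMapOfInjective G hGinj P).finrank_eq
      _ ≤ Module.finrank ℝ U := Submodule.finrank_mono hmapPU
  have hTrank : ∑ jq : Fin m × Fin n, Module.finrank ℝ (Wy jq.1) ≤ (srsrCPO d v Y).rank := by
    rw [hcpoA, Matrix.rank_transpose_mul_self, Matrix.rank_eq_finrank_span_row]
    rw [← hfinP]
    exact hPle
  -- arithmetic wrap-up
  have hsum : ∑ jq : Fin m × Fin n, Module.finrank ℝ (Wy jq.1)
      = n * ∑ j, Module.finrank ℝ (Wy j) := by
    rw [Fintype.sum_prod_type_right]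
    exact (Finset.sum_const (∑ j, Module.finrank ℝ (Wy j))).trans (by simp)
  have hZ : (∑ j, (Module.finrank ℝ (Wy j) : ℤ))
      = ((∑ j, Module.finrank ℝ (Wy j) : ℕ) : ℤ) := (Nat.cast_sum _ _).symm
  have hcard : (Y.rank : ℤ) ≤ (I.card : ℤ) * (D : ℤ) := by exact_mod_cast hYrank
  have hT2 : (n : ℤ) * ((∑ j, Module.finrank ℝ (Wy j) : ℕ) : ℤ)
      ≤ ((srsrCPO d v Y).rank : ℤ) := by exact_mod_cast hsum ▸ hTrank
  have hw2 : ((srsrCPO d v Y).rank : ℤ) < (Y.rank : ℤ) := by exact_mod_cast hwit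
  rw [hZ]
  constructor <;> linarith
end

section
/- With the SRSR setup: for the cpo T_X and any positive semi-definite N×N matrix Y with block diagonal entries y_{r,r} (r ∈ ((i−1)D, iD], i ∈ [n]), the operator value T_X(Y) is an (mn)×(mn) block diagonal matrix whose (q,q)-block, for q ∈ ((j−1)n, jn], equals Σ_{i=1}^n v_i^j (Σ_{r ∈ ((i−1)D, iD]} y_{r,r}) (v_i^j)^T. Consequently rank(T_X(Y)) = Σ_{j=1}^m n · rank(Σ_{i=1}^n v_i^j (Σ_r y_{r,r}) (v_i^j)^T). -/
open Matrix BigOperators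
open scoped Classical

/-- The submodule `Submodule.pi Set.univ p` is linearly equivalent to `Π i, p i`. -/
noncomputable def piSubmoduleEquiv {ι : Type*} {φ : ι → Type*}
    [∀ i, AddCommGroup (φ i)] [∀ i, Module ℝ (φ i)]
    (p : ∀ i, Submodule ℝ (φ i)) :
    (Submodule.pi Set.univ p) ≃ₗ[ℝ] ∀ i, p i where
  toFun x i := ⟨x.1 i, x.2 i trivial⟩
  map_add' x y := rfl
  map_smul' c x := rfl
  invFun f := ⟨fun i => (f i).1, fun i _ => (f i).2⟩
  left_inv x := rfl
  right_inv f := rfl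

lemma blockDiagonal'_mulVec {ι : Type*} [Fintype ι] [DecidableEq ι]
    {p' q' : ι → Type*} [∀ i, Fintype (p' i)] [∀ i, Fintype (q' i)]
    (M : ∀ i, Matrix (p' i) (q' i) ℝ) (x : (Σ i, q' i) → ℝ) (i : ι) (a : p' i) :
    (blockDiagonal' M).mulVec x ⟨i, a⟩ = (M i).mulVec (fun b => x ⟨i, b⟩) a := by
  rw [mulVec, dotProduct, ← Finset.univ_sigma_univ, Finset.sum_sigma]
  rw [Finset.sum_eq_single i]
  · simp [mulVec, dotProduct, blockDiagonal'_apply]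
  · intro j _ hj
    apply Finset.sum_eq_zero
    intro b _
    rw [blockDiagonal'_apply, dif_neg (fun h => hj h.symm), zero_mul]
  · simp

lemma rank_blockDiagonal'_real {ι : Type*} [Fintype ι] [DecidableEq ι]
    {p' q' : ι → Type*} [∀ i, Fintype (p' i)] [∀ i, Fintype (q' i)]
    [∀ i, DecidableEq (q' i)]
    (M : ∀ i, Matrix (p' i) (q' i) ℝ) :
    (blockDiagonal' M).rank = ∑ i, (M i).rank := by
  classical
  set f : ∀ i, (q' i → ℝ) →ₗ[ℝ] (p' i → ℝ) := fun i => (M i).mulVecLin with hf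
  set S : (∀ i, q' i → ℝ) →ₗ[ℝ] (∀ i, p' i → ℝ) :=
    LinearMap.pi (fun i => (f i).comp (LinearMap.proj i)) with hS
  have hrangeS : LinearMap.range S = Submodule.pi Set.univ (fun i => LinearMap.range (f i)) := by
    ext y
    constructor
    · rintro ⟨x, rfl⟩ i -
      exact ⟨x i, rfl⟩
    · intro hy
      choose x hx using fun i => hy i trivial
      exact ⟨x, funext fun i => hx i⟩
  set e₁ : ((Σ i, q' i) → ℝ) ≃ₗ[ℝ] ∀ i, (q' i → ℝ) :=
    LinearEquiv.piCurry ℝ (fun i (_ : q' i) => ℝ) with he₁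
  set e₂ : ((Σ i, p' i) → ℝ) ≃ₗ[ℝ] ∀ i, (p' i → ℝ) :=
    LinearEquiv.piCurry ℝ (fun i (_ : p' i) => ℝ) with he₂
  have hT : (blockDiagonal' M).mulVecLin =
      (e₂.symm.toLinearMap.comp S).comp e₁.toLinearMap := by
    apply LinearMap.ext; intro x
    funext pa
    obtain ⟨i, a⟩ := pa
    simp only [LinearMap.comp_apply, mulVecLin_apply, LinearEquiv.coe_coe]
    rw [blockDiagonal'_mulVec]
    rfl
  rw [Matrix.rank, hT, LinearMap.range_comp, LinearEquiv.range, Submodule.map_top,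
    LinearMap.range_comp, LinearEquiv.finrank_map_eq, hrangeS,
    finrank_pi_submodule]
  rfl

lemma kraus_term {n m D : ℕ} (d : Fin m → ℕ)
    (v : ∀ (_ : Fin n) (j : Fin m), Fin (d j) → ℝ)
    (i : Fin n) (j0 : Fin m) (q0 : Fin n) (r0 : Fin D)
    (Y : Matrix (SrsrCol n D) (SrsrCol n D) ℝ) (p p' : SrsrRow n m d) :
    (srsrKraus d v i j0 q0 r0 * Y * (srsrKraus d v i j0 q0 r0)ᵀ) p p'
      = srsrKraus d v i j0 q0 r0 p (i, r0) * Y (i, r0) (i, r0) *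
        srsrKraus d v i j0 q0 r0 p' (i, r0) := by
  have hz : ∀ (pp : SrsrRow n m d) (c : SrsrCol n D), c ≠ (i, r0) →
      srsrKraus d v i j0 q0 r0 pp c = 0 := by
    intro pp c hc
    rw [srsrKraus, dif_neg]
    rintro ⟨-, -, h1, h2⟩
    exact hc (Prod.ext h1 h2)
  rw [Matrix.mul_apply, Finset.sum_eq_single ((i, r0) : SrsrCol n D)]
  · rw [Matrix.transpose_apply, Matrix.mul_apply,
      Finset.sum_eq_single ((i, r0) : SrsrCol n D)]
    · intro c _ hc
      rw [hz p c hc, zero_mul]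
    · simp
  · intro c _ hc
    rw [Matrix.transpose_apply, hz p' c hc, mul_zero]
  · simp

theorem stmt13 {n m D : ℕ} (d : Fin m → ℕ) (hD : D = ∑ j, d j)
    (v : ∀ (_ : Fin n) (j : Fin m), Fin (d j) → ℝ)
    (Y : Matrix (SrsrCol n D) (SrsrCol n D) ℝ) (hpsd : Y.PosSemidef) :
    (∀ (j j' : Fin m) (q q' : Fin n) (a : Fin (d j)) (b : Fin (d j')),
        srsrCPO d v Y ⟨j, q, a⟩ ⟨j', q', b⟩ =
          if j = j' ∧ q = q' then
            ∑ i : Fin n, (∑ r : Fin D, Y (i, r) (i, r)) * (v i j a * v i j' b)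
          else 0) ∧
      (srsrCPO d v Y).rank =
        ∑ j : Fin m, n *
          (∑ i : Fin n, (∑ r : Fin D, Y (i, r) (i, r)) •
            vecMulVec (v i j) (v i j)).rank := by
  have hcell : ∀ (j j' : Fin m) (q q' : Fin n) (a : Fin (d j)) (b : Fin (d j')),
      srsrCPO d v Y ⟨j, q, a⟩ ⟨j', q', b⟩ =
        if j = j' ∧ q = q' then
          ∑ i : Fin n, (∑ r : Fin D, Y (i, r) (i, r)) * (v i j a * v i j' b)
        else 0 := by
    intro j j' q q' a b
    rw [srsrCPO]
    simp only [Matrix.sum_apply, kraus_term d v]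
    by_cases hj : j = j' ∧ q = q'
    · obtain ⟨rfl, rfl⟩ := hj
      rw [if_pos ⟨rfl, rfl⟩]
      apply Finset.sum_congr rfl
      intro i _
      rw [Finset.sum_eq_single j]
      · rw [Finset.sum_eq_single q]
        · rw [Finset.sum_mul]
          apply Finset.sum_congr rfl
          intro r _
          simp only [srsrKraus]
          rw [dif_pos (by simp), dif_pos (by simp)]
          simp only [Fin.cast_eq_self]
          ring
        · intro q0 _ hq0
          apply Finset.sum_eq_zero
          intro r _
          rw [srsrKraus, dif_neg (by rintro ⟨-, h, -⟩; exact hq0 h.symm), zero_mul, zero_mul]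
        · simp
      · intro j0 _ hj0
        apply Finset.sum_eq_zero
        intro q0 _
        apply Finset.sum_eq_zero
        intro r _
        rw [srsrKraus, dif_neg (by rintro ⟨h, -⟩; exact hj0 h.symm), zero_mul, zero_mul]
      · simp
    · rw [if_neg hj]
      apply Finset.sum_eq_zero; intro i _
      apply Finset.sum_eq_zero; intro j0 _
      apply Finset.sum_eq_zero; intro q0 _
      apply Finset.sum_eq_zero; intro r _
      by_cases h1 : (⟨j, q, a⟩ : SrsrRow n m d).1 = j0 ∧ q = q0 ∧ i = i ∧ r = r
      · by_cases h2 : (⟨j', q', b⟩ : SrsrRow n m d).1 = j0 ∧ q' = q0 ∧ i = i ∧ r = r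
        · exact absurd ⟨h1.1.trans h2.1.symm, h1.2.1.trans h2.2.1.symm⟩ hj
        · rw [srsrKraus]
          rw [show (srsrKraus d v i j0 q0 r ⟨j', q', b⟩ (i, r)) = 0 from dif_neg h2, mul_zero]
      · rw [show (srsrKraus d v i j0 q0 r ⟨j, q, a⟩ (i, r)) = 0 from dif_neg h1, zero_mul,
          zero_mul]
  refine ⟨hcell, ?_⟩
  set B : ∀ j : Fin m, Matrix (Fin (d j)) (Fin (d j)) ℝ :=
    fun j => ∑ i : Fin n, (∑ r : Fin D, Y (i, r) (i, r)) • vecMulVec (v i j) (v i j) with hB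
  let e : (Σ p : Fin m × Fin n, Fin (d p.1)) ≃ SrsrRow n m d :=
    { toFun := fun x => ⟨x.1.1, x.1.2, x.2⟩
      invFun := fun x => ⟨(x.1, x.2.1), x.2.2⟩
      left_inv := fun ⟨⟨j, q⟩, a⟩ => rfl
      right_inv := fun ⟨j, q, a⟩ => rfl }
  have hEq : srsrCPO d v Y =
      (blockDiagonal' (fun p : Fin m × Fin n => B p.1)).submatrix e.symm e.symm := by
    ext p p'
    obtain ⟨j, q, a⟩ := p; obtain ⟨j', q', b⟩ := p'
    rw [hcell j j' q q' a b, Matrix.submatrix_apply]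
    have h1 : e.symm ⟨j, (q, a)⟩ = ⟨(j, q), a⟩ := rfl
    have h2 : e.symm ⟨j', (q', b)⟩ = ⟨(j', q'), b⟩ := rfl
    rw [h1, h2, Matrix.blockDiagonal'_apply']
    by_cases h : j = j' ∧ q = q'
    · obtain ⟨rfl, rfl⟩ := h
      rw [if_pos ⟨rfl, rfl⟩, dif_pos rfl]
      simp [hB, Matrix.sum_apply, vecMulVec_apply, mul_assoc]
    · rw [if_neg h, dif_neg (by simpa [Prod.ext_iff] using h)]
  rw [hEq, Matrix.rank_submatrix, rank_blockDiagonal'_real, Fintype.sum_prod_type]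
  refine Finset.sum_congr rfl fun j _ => ?_
  have hc := Finset.sum_const (s := (Finset.univ : Finset (Fin n))) (B j).rank
  rw [Finset.card_univ, Fintype.card_fin, smul_eq_mul] at hc
  exact hc
end

section
/- Let Q be a bipartite quiver with sources x_1,...,x_n and sinks y_1,...,y_m, (V, σ) a quiver datum with σ positive on sources, negative on sinks, and σ·dim V = 0, and let A_{V,σ} = {A_1,...,A_L} be the associated Kraus operators. If W ≤ V is a subrepresentation, and Y is built from W as the block diagonal positive semi-definite matrix with blocks Y_r = Σ_l u_l^i (u_l^i)^T (orthonormal bases of W(x_i), repeated σ(x_i) times), then rank(Y) − rank(T_{V,σ}(Y)) ≥ σ · dim W. -/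
open Matrix BigOperators
open scoped Classical

/-- Row index type for the Brascamp–Lieb Kraus operators: for each sink `j` there are
`σm j` blocks, each of height `dy j`. -/
abbrev BLRow (m : ℕ) (σm dy : Fin m → ℕ) := Σ j : Fin m, Fin (σm j) × Fin (dy j)

/-- Column index type: for each source `i` there are `σp i` blocks, each of width `dx i`. -/
abbrev BLCol (n : ℕ) (σp dx : Fin n → ℕ) := Σ i : Fin n, Fin (σp i) × Fin (dx i)

/-- The Kraus operator `V^{i,j,a}_{q,r}` of a bipartite quiver datum: block matrix whose
`((j,q),(i,r))`-block is the matrix `V(a)` and all other entries vanish. -/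
noncomputable def blKraus {n m : ℕ} (σp dx : Fin n → ℕ) (σm dy : Fin m → ℕ)
    (na : Fin n → Fin m → ℕ)
    (V : ∀ (i : Fin n) (j : Fin m), Fin (na i j) → Matrix (Fin (dy j)) (Fin (dx i)) ℝ)
    (i : Fin n) (j : Fin m) (a : Fin (na i j)) (q : Fin (σm j)) (r : Fin (σp i)) :
    Matrix (BLRow m σm dy) (BLCol n σp dx) ℝ :=
  fun p c =>
    if h : p.1 = j ∧ c.1 = i then
      if Fin.cast (congrArg σm h.1) p.2.1 = q ∧ Fin.cast (congrArg σp h.2) c.2.1 = r then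
        V i j a (Fin.cast (congrArg dy h.1) p.2.2) (Fin.cast (congrArg dx h.2) c.2.2)
      else 0
    else 0

/-- The Brascamp–Lieb completely positive operator `T_{V,σ}` of a bipartite quiver datum. -/
noncomputable def blCPO {n m : ℕ} (σp dx : Fin n → ℕ) (σm dy : Fin m → ℕ)
    (na : Fin n → Fin m → ℕ)
    (V : ∀ (i : Fin n) (j : Fin m), Fin (na i j) → Matrix (Fin (dy j)) (Fin (dx i)) ℝ)
    (Y : Matrix (BLCol n σp dx) (BLCol n σp dx) ℝ) :
    Matrix (BLRow m σm dy) (BLRow m σm dy) ℝ :=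
  ∑ i : Fin n, ∑ j : Fin m, ∑ a : Fin (na i j), ∑ q : Fin (σm j), ∑ r : Fin (σp i),
    blKraus σp dx σm dy na V i j a q r * Y * (blKraus σp dx σm dy na V i j a q r)ᵀ

/-- place a vector in block (j,q) -/
noncomputable def blInj {m : ℕ} (σm dy : Fin m → ℕ) (j : Fin m) (q : Fin (σm j)) :
    (Fin (dy j) → ℝ) →ₗ[ℝ] (BLRow m σm dy → ℝ) where
  toFun v := fun p =>
    if h : p.1 = j then
      if Fin.cast (congrArg σm h) p.2.1 = q then v (Fin.cast (congrArg dy h) p.2.2) else 0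
    else 0
  map_add' x y := by
    funext p; rcases p with ⟨j', q', d⟩; dsimp
    by_cases h : j' = j
    · subst h; simp only [dif_pos rfl]
      by_cases hq : q' = q <;> simp [hq]
    · simp [h]
  map_smul' c x := by
    funext p; rcases p with ⟨j', q', d⟩; dsimp
    by_cases h : j' = j
    · subst h; simp only [dif_pos rfl]
      by_cases hq : q' = q <;> simp [hq]
    · simp [h]

lemma blInj_apply_same {m : ℕ} (σm dy : Fin m → ℕ) (j : Fin m) (q : Fin (σm j))
    (v : Fin (dy j) → ℝ) (q' : Fin (σm j)) (d : Fin (dy j)) :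
    blInj σm dy j q v ⟨j, (q', d)⟩ = if q' = q then v d else 0 := by
  simp [blInj]

lemma blInj_apply_ne {m : ℕ} (σm dy : Fin m → ℕ) (j : Fin m) (q : Fin (σm j))
    (v : Fin (dy j) → ℝ) (p : BLRow m σm dy) (h : p.1 ≠ j) :
    blInj σm dy j q v p = 0 := by
  simp [blInj, h]

lemma li_of_ortho {ι κ : Type*} [Fintype ι] [Fintype κ] (v : ι → κ → ℝ)
    (h : ∀ l l', dotProduct (v l) (v l') = if l = l' then 1 else 0) :
    LinearIndependent ℝ v := by
  rw [Fintype.linearIndependent_iff]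
  intro g hg l
  have h2 : (∑ i, g i • v i) ⬝ᵥ v l = ∑ i, g i * (v i ⬝ᵥ v l) := by
    simp only [dotProduct, Finset.sum_apply, Pi.smul_apply, smul_eq_mul, Finset.sum_mul,
      Finset.mul_sum, mul_assoc]
    rw [Finset.sum_comm]
  have h3 := congrArg (fun x => x ⬝ᵥ v l) hg
  simp only [h2, zero_dotProduct, h, mul_ite, mul_one, mul_zero,
    Finset.sum_ite_eq', Finset.mem_univ, if_true] at h3
  exact h3

lemma sum_mulVec {ι α β : Type*} [Fintype ι] [Fintype β] (M : ι → Matrix α β ℝ) (v : β → ℝ) :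
    (∑ t, M t).mulVec v = ∑ t, (M t).mulVec v := by
  funext x
  simp only [Matrix.mulVec, dotProduct, Finset.sum_apply, Matrix.sum_apply, Finset.sum_mul]
  rw [Finset.sum_comm]

lemma kraus_mulVec {n m : ℕ} (σp dx : Fin n → ℕ) (σm dy : Fin m → ℕ)
    (na : Fin n → Fin m → ℕ)
    (V : ∀ (i : Fin n) (j : Fin m), Fin (na i j) → Matrix (Fin (dy j)) (Fin (dx i)) ℝ)
    (i : Fin n) (j : Fin m) (a : Fin (na i j)) (q : Fin (σm j)) (r : Fin (σp i))
    (z : BLCol n σp dx → ℝ) :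
    (blKraus σp dx σm dy na V i j a q r).mulVec z
      = blInj σm dy j q ((V i j a).mulVec fun e => z ⟨i, (r, e)⟩) := by
  funext p; rcases p with ⟨j', q', d⟩
  by_cases h : j' = j
  · subst h
    rw [blInj_apply_same]
    simp only [Matrix.mulVec, dotProduct, blKraus]
    rw [← Finset.univ_sigma_univ, Finset.sum_sigma]
    rw [Finset.sum_eq_single_of_mem i (Finset.mem_univ i)
      (fun i' _ hne => Finset.sum_eq_zero fun t _ => by simp [hne])]
    by_cases hq : q' = q
    · simp [hq, Fintype.sum_prod_type, ite_mul, zero_mul, Finset.sum_ite_irrel,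
        Finset.sum_const_zero, Finset.sum_ite_eq']
    · simp [hq]
  · rw [blInj_apply_ne _ _ _ _ _ _ h]
    simp [Matrix.mulVec, dotProduct, blKraus, h]

lemma Y_mulVec_block {n : ℕ} (σp dx : Fin n → ℕ) (f : Fin n → ℕ)
    (u : ∀ i, Fin (f i) → (Fin (dx i) → ℝ))
    (Y : Matrix (BLCol n σp dx) (BLCol n σp dx) ℝ)
    (hY : ∀ p c : BLCol n σp dx,
      Y p c =
        if h : p.1 = c.1 then
          if Fin.cast (congrArg σp h) p.2.1 = c.2.1 then
            ∑ l : Fin (f c.1),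
              u p.1 (Fin.cast (congrArg f h).symm l) p.2.2 * u c.1 l c.2.2
          else 0
        else 0)
    (w : BLCol n σp dx → ℝ) (i : Fin n) (r : Fin (σp i)) :
    (fun e => Y.mulVec w ⟨i, (r, e)⟩)
      = ∑ l : Fin (f i), (∑ e', u i l e' * w ⟨i, (r, e')⟩) • u i l := by
  funext e
  show (∑ c : BLCol n σp dx, Y ⟨i, (r, e)⟩ c * w c) = _
  simp only [hY, Finset.sum_apply, Pi.smul_apply, smul_eq_mul]
  rw [← Finset.univ_sigma_univ, Finset.sum_sigma]
  rw [Finset.sum_eq_single_of_mem i (Finset.mem_univ i)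
    (fun i' _ hne => Finset.sum_eq_zero fun t _ => by simp [Ne.symm hne])]
  simp only [Fintype.sum_prod_type, ite_mul, zero_mul, Finset.sum_ite_irrel,
    Finset.sum_const_zero, Finset.sum_ite_eq, Finset.mem_univ, if_true, dite_true,
    Fin.cast_refl, id_eq]
  simp only [Finset.sum_mul]
  rw [Finset.sum_comm]
  exact Finset.sum_congr rfl fun l _ => Finset.sum_congr rfl fun e' _ => by ring

lemma Y_fixed {n : ℕ} (σp dx : Fin n → ℕ) (f : Fin n → ℕ)
    (u : ∀ i, Fin (f i) → (Fin (dx i) → ℝ))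
    (hortho : ∀ i (l l' : Fin (f i)),
      dotProduct (u i l) (u i l') = if l = l' then (1 : ℝ) else 0)
    (Y : Matrix (BLCol n σp dx) (BLCol n σp dx) ℝ)
    (hY : ∀ p c : BLCol n σp dx,
      Y p c =
        if h : p.1 = c.1 then
          if Fin.cast (congrArg σp h) p.2.1 = c.2.1 then
            ∑ l : Fin (f c.1),
              u p.1 (Fin.cast (congrArg f h).symm l) p.2.2 * u c.1 l c.2.2
          else 0
        else 0)
    (i : Fin n) (r : Fin (σp i)) (l : Fin (f i)) :
    Y.mulVec (blInj σp dx i r (u i l)) = blInj σp dx i r (u i l) := by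
  funext p; rcases p with ⟨i', r', e⟩
  have hb := congrFun (Y_mulVec_block σp dx f u Y hY (blInj σp dx i r (u i l)) i' r') e
  rw [hb]
  by_cases h : i' = i
  · subst h
    by_cases hr : r' = r
    · subst hr
      have ho : ∀ l' : Fin (f i'), (∑ e', u i' l' e' * u i' l e') = if l' = l then (1:ℝ) else 0 :=
        fun l' => hortho i' l' l
      simp only [blInj_apply_same, Finset.sum_apply, Pi.smul_apply, smul_eq_mul, if_true,
        ite_self, eq_self_iff_true]
      simp only [ho, ite_mul, one_mul, zero_mul, Finset.sum_ite_eq', Finset.mem_univ, if_true]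
    · simp [blInj_apply_same, hr]
  · have hz : ∀ (r'' : Fin (σp i')) (e'' : Fin (dx i')),
        blInj σp dx i r (u i l) ⟨i', (r'', e'')⟩ = 0 :=
      fun _ _ => blInj_apply_ne _ _ _ _ _ _ h
    simp [hz, blInj_apply_ne _ _ _ _ _ (⟨i',(r',e)⟩ : BLCol n σp dx) h]

lemma E_ortho {n : ℕ} (σp dx : Fin n → ℕ) (f : Fin n → ℕ)
    (u : ∀ i, Fin (f i) → (Fin (dx i) → ℝ))
    (hortho : ∀ i (l l' : Fin (f i)),
      dotProduct (u i l) (u i l') = if l = l' then (1 : ℝ) else 0)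
    (t t' : Σ i : Fin n, Fin (σp i) × Fin (f i)) :
    dotProduct (blInj σp dx t.1 t.2.1 (u t.1 t.2.2)) (blInj σp dx t'.1 t'.2.1 (u t'.1 t'.2.2))
      = if t = t' then 1 else 0 := by
  rcases t with ⟨i, r, l⟩; rcases t' with ⟨i', r', l'⟩
  dsimp only
  by_cases h : i' = i
  · subst h
    unfold dotProduct
    rw [← Finset.univ_sigma_univ, Finset.sum_sigma]
    rw [Finset.sum_eq_single_of_mem i' (Finset.mem_univ i')
      (fun i'' _ hne => Finset.sum_eq_zero fun t _ => by
        rw [blInj_apply_ne _ _ _ _ _ _ hne, zero_mul])]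
    by_cases hr : r' = r
    · subst hr
      simp only [blInj_apply_same, Fintype.sum_prod_type, ite_mul, zero_mul, mul_ite, mul_zero,
        Finset.sum_ite_irrel, Finset.sum_const_zero, Finset.sum_ite_eq', Finset.mem_univ, if_true]
      have := hortho i' l l'
      unfold dotProduct at this
      rw [this]
      by_cases hl : l = l' <;> simp [hl, Sigma.mk.inj_iff]
    · simp [blInj_apply_same, Fintype.sum_prod_type, ite_mul, mul_ite, zero_mul, mul_zero,
        hr, Ne.symm hr, Sigma.mk.inj_iff]
  · unfold dotProduct
    rw [Finset.sum_eq_zero fun p _ => ?_]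
    · rw [if_neg (fun hh : (⟨i, (r, l)⟩ : Σ i : Fin n, Fin (σp i) × Fin (f i)) = ⟨i', (r', l')⟩ =>
        h (congrArg Sigma.fst hh).symm)]
    · by_cases hp : p.1 = i
      · rw [blInj_apply_ne σp dx i' r' _ p (fun hh => h (hh.symm.trans hp)), mul_zero]
      · rw [blInj_apply_ne σp dx i r _ p hp, zero_mul]

theorem stmt14 {n m : ℕ} (σp dx : Fin n → ℕ) (σm dy : Fin m → ℕ)
    (hσp : ∀ i, 0 < σp i) (hσm : ∀ j, 0 < σm j)
    (hbal : ∑ i, σp i * dx i = ∑ j, σm j * dy j)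
    (na : Fin n → Fin m → ℕ)
    (V : ∀ (i : Fin n) (j : Fin m), Fin (na i j) → Matrix (Fin (dy j)) (Fin (dx i)) ℝ)
    (Wx : ∀ i : Fin n, Submodule ℝ (Fin (dx i) → ℝ))
    (Wy : ∀ j : Fin m, Submodule ℝ (Fin (dy j) → ℝ))
    (hcompat : ∀ i j (a : Fin (na i j)), (Wx i).map (V i j a).mulVecLin ≤ Wy j)
    (f : Fin n → ℕ) (u : ∀ i, Fin (f i) → (Fin (dx i) → ℝ))
    (hspan : ∀ i, Submodule.span ℝ (Set.range (u i)) = Wx i)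
    (hortho : ∀ i (l l' : Fin (f i)),
      dotProduct (u i l) (u i l') = if l = l' then (1 : ℝ) else 0)
    (Y : Matrix (BLCol n σp dx) (BLCol n σp dx) ℝ)
    (hY : ∀ p c : BLCol n σp dx,
      Y p c =
        if h : p.1 = c.1 then
          if Fin.cast (congrArg σp h) p.2.1 = c.2.1 then
            ∑ l : Fin (f c.1),
              u p.1 (Fin.cast (congrArg f h).symm l) p.2.2 * u c.1 l c.2.2
          else 0
        else 0) :
    (∑ i, (σp i : ℤ) * Module.finrank ℝ (Wx i)) -
        (∑ j, (σm j : ℤ) * Module.finrank ℝ (Wy j)) ≤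
      (Y.rank : ℤ) - (blCPO σp dx σm dy na V Y).rank := by
  classical
  have hfW : ∀ i, Module.finrank ℝ (Wx i) = f i := by
    intro i
    rw [← hspan i, finrank_span_eq_card (li_of_ortho (u i)
      (fun l l' => by
        by_cases h : l = l'
        · subst h; simp [hortho i l l]
        · simp [hortho i l l', h])), Fintype.card_fin]
  -- lower bound on rank Y
  set E : (Σ i : Fin n, Fin (σp i) × Fin (f i)) → (BLCol n σp dx → ℝ) :=
    fun t => blInj σp dx t.1 t.2.1 (u t.1 t.2.2) with hE
  have liE : LinearIndependent ℝ E :=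
    li_of_ortho E fun t t' => by
      by_cases h : t = t'
      · subst h; simp [hE, E_ortho σp dx f u hortho t t]
      · simp [hE, E_ortho σp dx f u hortho t t', h]
  have hrange : ∀ t, E t ∈ LinearMap.range Y.mulVecLin := fun t =>
    ⟨E t, by
      rw [Matrix.mulVecLin_apply]
      rcases t with ⟨i, r, l⟩
      exact Y_fixed σp dx f u hortho Y hY i r l⟩
  have hYrank : (∑ i, σp i * f i) ≤ Y.rank := by
    have hle : Submodule.span ℝ (Set.range E) ≤ LinearMap.range Y.mulVecLin :=
      Submodule.span_le.2 (Set.range_subset_iff.2 hrange)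
    have h1 := Submodule.finrank_mono hle
    rw [finrank_span_eq_card liE] at h1
    rw [Matrix.rank]
    simpa [Fintype.card_sigma, Fintype.card_prod] using h1
  -- upper bound on rank of blCPO
  set g : Fin m → ℕ := fun j => Module.finrank ℝ (Wy j) with hg
  set b : ∀ j, Fin (g j) → (Fin (dy j) → ℝ) :=
    fun j l => ((Module.finBasis ℝ (Wy j)) l : Fin (dy j) → ℝ) with hb
  have hbspan : ∀ j, Wy j ≤ Submodule.span ℝ (Set.range (b j)) := by
    intro j
    have heq : Submodule.span ℝ (Set.range (b j)) = Wy j := by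
      have : Set.range (b j) = (Wy j).subtype '' Set.range (Module.finBasis ℝ (Wy j)) := by
        rw [← Set.range_comp]; rfl
      rw [this, ← Submodule.map_span, Module.Basis.span_eq, Submodule.map_top, Submodule.range_subtype]
    exact heq.symm.le
  set F : (Σ j : Fin m, Fin (σm j) × Fin (g j)) → (BLRow m σm dy → ℝ) :=
    fun t => blInj σm dy t.1 t.2.1 (b t.1 t.2.2) with hF
  have hcol : LinearMap.range (blCPO σp dx σm dy na V Y).mulVecLin
      ≤ Submodule.span ℝ (Set.range F) := by
    rintro x ⟨v, rfl⟩
    rw [Matrix.mulVecLin_apply, blCPO, _root_.sum_mulVec]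
    refine Submodule.sum_mem _ fun i _ => ?_
    rw [_root_.sum_mulVec]
    refine Submodule.sum_mem _ fun j _ => ?_
    rw [_root_.sum_mulVec]
    refine Submodule.sum_mem _ fun a _ => ?_
    rw [_root_.sum_mulVec]
    refine Submodule.sum_mem _ fun q _ => ?_
    rw [_root_.sum_mulVec]
    refine Submodule.sum_mem _ fun r _ => ?_
    rw [← Matrix.mulVec_mulVec, ← Matrix.mulVec_mulVec, kraus_mulVec]
    set z := Y.mulVec ((blKraus σp dx σm dy na V i j a q r)ᵀ.mulVec v) with hz
    have hblk : (fun e => z ⟨i, (r, e)⟩) ∈ Wx i := by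
      rw [hz, Y_mulVec_block σp dx f u Y hY _ i r]
      refine Submodule.sum_mem _ fun l _ => Submodule.smul_mem _ _ ?_
      rw [← hspan i]; exact Submodule.subset_span (Set.mem_range_self l)
    have hWy : (V i j a).mulVec (fun e => z ⟨i, (r, e)⟩) ∈ Wy j :=
      hcompat i j a ⟨_, hblk, by rw [Matrix.mulVecLin_apply]⟩
    have hsp := hbspan j hWy
    have hmap := Submodule.mem_map_of_mem (f := blInj σm dy j q) hsp
    rw [Submodule.map_span] at hmap
    refine Submodule.span_mono ?_ hmap
    rintro _ ⟨_, ⟨l, rfl⟩, rfl⟩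
    exact ⟨⟨j, (q, l)⟩, rfl⟩
  have hTrank : (blCPO σp dx σm dy na V Y).rank ≤ ∑ j, σm j * g j := by
    rw [Matrix.rank]
    have h1 := Submodule.finrank_mono hcol
    have h2 : Module.finrank ℝ (Submodule.span ℝ (Set.range F))
        ≤ Fintype.card (Σ j : Fin m, Fin (σm j) × Fin (g j)) := finrank_range_le_card F
    calc Module.finrank ℝ (LinearMap.range (blCPO σp dx σm dy na V Y).mulVecLin)
        ≤ Fintype.card (Σ j : Fin m, Fin (σm j) × Fin (g j)) := le_trans h1 h2
      _ = ∑ j, σm j * g j := by simp [Fintype.card_sigma, Fintype.card_prod]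
  have e1 : (∑ i, (σp i : ℤ) * Module.finrank ℝ (Wx i)) = (∑ i, σp i * f i : ℕ) := by
    push_cast
    exact Finset.sum_congr rfl fun i _ => by rw [hfW i]
  have e2 : (∑ j, (σm j : ℤ) * Module.finrank ℝ (Wy j)) = (∑ j, σm j * g j : ℕ) := by
    push_cast
    rfl
  rw [e1, e2]
  have c1 : ((∑ i, σp i * f i : ℕ) : ℤ) ≤ (Y.rank : ℤ) := Int.ofNat_le.2 hYrank
  have c2 : ((blCPO σp dx σm dy na V Y).rank : ℤ) ≤ ((∑ j, σm j * g j : ℕ) : ℤ) :=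
    Int.ofNat_le.2 hTrank
  omega
end

section
/- Let Q be a bipartite quiver and (V, σ) a quiver datum as above with Kraus operators A_{V,σ}. Let Y ∈ ℝ^{N×N} be positive semi-definite and block diagonal with blocks Y_r ∈ ℝ^{dim V(x_i)×dim V(x_i)}. Define W(x_i) as the span of the (scaled) eigenvectors of all Y_r with r in the index range of x_i, and W(y_j) = Σ_i Σ_{a: x_i→y_j} V(a)(W(x_i)). Then W is a subrepresentation of V and σ · dim W ≥ rank(Y) − rank(T_{V,σ}(Y)). -/
open Matrix BigOperators Submodule
open scoped Classical

section Aux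

/-- finrank of a finite iSup is at most the sum of the finranks. -/
lemma finrank_iSup_le {K V : Type*} [Field K] [AddCommGroup V] [Module K V]
    [FiniteDimensional K V] {κ : Type*} [Fintype κ] (p : κ → Submodule K V) :
    Module.finrank K ↥(⨆ k, p k) ≤ ∑ k, Module.finrank K ↥(p k) := by
  classical
  suffices H : ∀ s : Finset κ, Module.finrank K ↥(s.sup p) ≤ ∑ k ∈ s, Module.finrank K ↥(p k) by
    rw [← Finset.sup_univ_eq_iSup]; exact H Finset.univ
  intro s
  induction s using Finset.induction_on with
  | empty => simp
  | insert _ _ hns ih =>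
    rw [Finset.sup_insert, Finset.sum_insert hns]
    exact le_trans (Submodule.finrank_add_le_finrank_add_finrank _ _) (by omega)

/-- The range of a finite sum of outer products is the span of the vectors. -/
lemma range_sum_outer {ι κ : Type*} [Fintype ι] [Fintype κ] [DecidableEq ι]
    (w : κ → ι → ℝ) :
    LinearMap.range (Matrix.mulVecLin (∑ k, vecMulVec (w k) (w k))) =
      Submodule.span ℝ (Set.range w) := by
  classical
  set G : Matrix ι κ ℝ := Matrix.of (fun i k => w k i) with hG
  have hM : (∑ k, vecMulVec (w k) (w k)) = G * Gᵀ := by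
    ext i j
    simp [Matrix.mul_apply, vecMulVec_apply, Matrix.sum_apply, hG]
  have hle : LinearMap.range (G * Gᵀ).mulVecLin ≤ LinearMap.range G.mulVecLin := by
    rw [Matrix.mulVecLin_mul]; exact LinearMap.range_comp_le_range _ _
  have hfr : Module.finrank ℝ ↥(LinearMap.range (G * Gᵀ).mulVecLin)
      = Module.finrank ℝ ↥(LinearMap.range G.mulVecLin) :=
    Matrix.rank_self_mul_transpose G
  rw [hM, Submodule.eq_of_le_of_finrank_eq hle hfr, Matrix.range_mulVecLin]
  congr 1

/-- Lower bound on the dimension of a subspace containing images of independent blocks. -/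
lemma sum_finrank_le_of_maps {κ : Type*} [Fintype κ] {M : κ → Type*}
    [∀ k, AddCommGroup (M k)] [∀ k, Module ℝ (M k)] [∀ k, FiniteDimensional ℝ (M k)]
    {N : Type*} [AddCommGroup N] [Module ℝ N] [FiniteDimensional ℝ N]
    (φ : ∀ k, M k →ₗ[ℝ] N) (p : ∀ k, Submodule ℝ (M k)) (S : Submodule ℝ N)
    (hle : ∀ k, (p k).map (φ k) ≤ S)
    (hinj : ∀ x : ∀ k, M k, (∑ k, φ k (x k)) = 0 → ∀ k, x k = 0) :
    ∑ k, Module.finrank ℝ ↥(p k) ≤ Module.finrank ℝ ↥S := by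
  classical
  let Ψ : (∀ k, ↥(p k)) →ₗ[ℝ] N :=
    { toFun := fun x => ∑ k, φ k (x k)
      map_add' := by intro x y; simp [Finset.sum_add_distrib]
      map_smul' := by intro c x; simp [Finset.smul_sum] }
  have hΨinj : Function.Injective Ψ := by
    rw [injective_iff_map_eq_zero]
    intro x hx
    have := hinj (fun k => (x k : M k)) hx
    funext k
    exact Subtype.ext (this k)
  have hrange : LinearMap.range Ψ ≤ S := by
    rintro _ ⟨x, rfl⟩
    exact Submodule.sum_mem _ (fun k _ => hle k ⟨x k, (x k).2, rfl⟩)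
  calc ∑ k, Module.finrank ℝ ↥(p k)
      = Module.finrank ℝ (∀ k, ↥(p k)) := (Module.finrank_pi_fintype ℝ).symm
    _ = Module.finrank ℝ ↥(LinearMap.range Ψ) := (LinearMap.finrank_range_of_inj hΨinj).symm
    _ ≤ Module.finrank ℝ ↥S := Submodule.finrank_mono hrange

end Aux

section Emb

variable {N : ℕ} {σ d : Fin N → ℕ}

/-- Embedding of a vector into the `(i, r)` block of the big coordinate space. -/
noncomputable def blEmb (σ d : Fin N → ℕ) (i : Fin N) (r : Fin (σ i)) (v : Fin (d i) → ℝ) :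
    (Σ i : Fin N, Fin (σ i) × Fin (d i)) → ℝ :=
  fun c => if h : c.1 = i then
    if Fin.cast (congrArg σ h) c.2.1 = r then v (Fin.cast (congrArg d h) c.2.2) else 0
  else 0

lemma blEmb_apply_same (i : Fin N) (r r' : Fin (σ i)) (t : Fin (d i)) (v : Fin (d i) → ℝ) :
    blEmb σ d i r v ⟨i, (r', t)⟩ = if r' = r then v t else 0 := by
  simp [blEmb]

lemma blEmb_apply_ne {i i' : Fin N} (h : i' ≠ i) (r : Fin (σ i))
    (z : Fin (σ i') × Fin (d i')) (v : Fin (d i) → ℝ) :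
    blEmb σ d i r v ⟨i', z⟩ = 0 := by
  simp [blEmb, h]

/-- `blEmb` as a linear map. -/
noncomputable def blEmbL (σ d : Fin N → ℕ) (i : Fin N) (r : Fin (σ i)) :
    (Fin (d i) → ℝ) →ₗ[ℝ] ((Σ i : Fin N, Fin (σ i) × Fin (d i)) → ℝ) where
  toFun := blEmb σ d i r
  map_add' := by
    intro v w; funext c
    by_cases h : c.1 = i
    · simp only [blEmb, Pi.add_apply, dif_pos h]; split <;> simp
    · simp [blEmb, h]
  map_smul' := by
    intro c v; funext x
    by_cases h : x.1 = i
    · simp only [blEmb, Pi.smul_apply, RingHom.id_apply, dif_pos h]; split <;> simp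
    · simp [blEmb, h]

@[simp] lemma blEmbL_apply (i : Fin N) (r : Fin (σ i)) (v : Fin (d i) → ℝ) :
    blEmbL σ d i r v = blEmb σ d i r v := rfl

lemma sum_blEmb_mul (i : Fin N) (r : Fin (σ i)) (v : Fin (d i) → ℝ)
    (f : (Σ i : Fin N, Fin (σ i) × Fin (d i)) → ℝ) :
    ∑ c, blEmb σ d i r v c * f c = ∑ t, v t * f ⟨i, (r, t)⟩ := by
  rw [← Finset.univ_sigma_univ, Finset.sum_sigma]
  rw [Finset.sum_eq_single i]
  · rw [Fintype.sum_prod_type]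
    rw [Finset.sum_eq_single r]
    · simp [blEmb_apply_same]
    · intro r' _ hr'
      simp [blEmb_apply_same, hr']
    · simp
  · intro i' _ hi'
    simp [blEmb_apply_ne hi']
  · simp

lemma blEmb_dot (i : Fin N) (r : Fin (σ i)) (v w : Fin (d i) → ℝ) :
    blEmb σ d i r v ⬝ᵥ blEmb σ d i r w = v ⬝ᵥ w := by
  rw [dotProduct, sum_blEmb_mul]
  simp [dotProduct, blEmb_apply_same]

end Emb

section Main

variable {n m : ℕ} {σp dx : Fin n → ℕ} {σm dy : Fin m → ℕ}

lemma sum_sigma_univ {α : Type*} [Fintype α] {β : α → Type*} [∀ a, Fintype (β a)]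
    {M : Type*} [AddCommMonoid M] (f : (Σ a, β a) → M) :
    ∑ x : Σ a, β a, f x = ∑ a, ∑ b, f ⟨a, b⟩ := by
  rw [← Finset.univ_sigma_univ, Finset.sum_sigma]

lemma sum_mulVec' {ι κ : Type*} [Fintype ι] [Fintype κ] (f : κ → Matrix ι ι ℝ) (v : ι → ℝ) :
    (∑ k, f k) *ᵥ v = ∑ k, (f k) *ᵥ v := by
  funext z
  simp only [Matrix.mulVec, dotProduct, Matrix.sum_apply, Finset.sum_apply, Finset.sum_mul]
  exact Finset.sum_comm

lemma dotProduct_sum' {ι κ : Type*} [Fintype ι] [Fintype κ] (v : ι → ℝ) (g : κ → ι → ℝ) :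
    v ⬝ᵥ (∑ k, g k) = ∑ k, v ⬝ᵥ g k := by
  simp only [dotProduct, Finset.sum_apply, Finset.mul_sum]
  exact Finset.sum_comm

lemma mul_mul_transpose_apply {α β : Type*} [Fintype β] (K : Matrix α β ℝ)
    (Y : Matrix β β ℝ) (p p' : α) :
    (K * Y * Kᵀ) p p' = K p ⬝ᵥ (Y *ᵥ K p') := by
  simp only [Matrix.mul_apply, Matrix.transpose_apply, Matrix.mulVec, dotProduct,
    Finset.sum_mul, Finset.mul_sum]
  rw [Finset.sum_comm]
  exact Finset.sum_congr rfl fun c _ => Finset.sum_congr rfl fun c' _ => by ring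

variable {na : Fin n → Fin m → ℕ}
  {V : ∀ (i : Fin n) (j : Fin m), Fin (na i j) → Matrix (Fin (dy j)) (Fin (dx i)) ℝ}

lemma blKraus_row_eq (i : Fin n) (j : Fin m) (a : Fin (na i j)) (q : Fin (σm j))
    (r : Fin (σp i)) (s : Fin (dy j)) :
    blKraus σp dx σm dy na V i j a q r ⟨j, (q, s)⟩ = blEmb σp dx i r (fun t => V i j a s t) := by
  funext c; rcases c with ⟨i₀, r₀, t⟩
  by_cases h : i₀ = i
  · subst h; simp [blKraus, blEmb]
  · simp [blKraus, blEmb, h]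

lemma blKraus_row_zero₁ {j₀ j : Fin m} (h : j₀ ≠ j) (i : Fin n) (a : Fin (na i j))
    (q : Fin (σm j)) (r : Fin (σp i)) (z : Fin (σm j₀) × Fin (dy j₀)) :
    blKraus σp dx σm dy na V i j a q r ⟨j₀, z⟩ = 0 := by
  funext c; simp [blKraus, h]

lemma blKraus_row_zero₂ {j : Fin m} {q₀ q : Fin (σm j)} (h : q₀ ≠ q) (i : Fin n)
    (a : Fin (na i j)) (r : Fin (σp i)) (s : Fin (dy j)) :
    blKraus σp dx σm dy na V i j a q r ⟨j, (q₀, s)⟩ = 0 := by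
  funext c; rcases c with ⟨i₀, r₀, t⟩
  by_cases h' : i₀ = i
  · subst h'; simp [blKraus, h]
  · simp [blKraus, h']

variable {Y : Matrix (BLCol n σp dx) (BLCol n σp dx) ℝ}
  {Yblk : ∀ i : Fin n, Fin (σp i) → Matrix (Fin (dx i)) (Fin (dx i)) ℝ}

lemma Y_mulVec_blEmb
    (hY : ∀ p c : BLCol n σp dx,
      Y p c =
        if h : p.1 = c.1 then
          if Fin.cast (congrArg σp h) p.2.1 = c.2.1 then
            Yblk c.1 c.2.1 (Fin.cast (congrArg dx h) p.2.2) c.2.2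
          else 0
        else 0)
    (i : Fin n) (r : Fin (σp i)) (w : Fin (dx i) → ℝ) :
    Y *ᵥ blEmb σp dx i r w = blEmb σp dx i r (Yblk i r *ᵥ w) := by
  funext c; rcases c with ⟨i₀, r₀, s⟩
  have hL : (Y *ᵥ blEmb σp dx i r w) ⟨i₀, (r₀, s)⟩
      = ∑ c', blEmb σp dx i r w c' * Y ⟨i₀, (r₀, s)⟩ c' := by
    simp [Matrix.mulVec, dotProduct, mul_comm]
  rw [hL, sum_blEmb_mul]
  by_cases h : i₀ = i
  · subst h
    by_cases hr : r₀ = r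
    · subst hr
      simp [hY, blEmb_apply_same, Matrix.mulVec, dotProduct, mul_comm]
    · simp [hY, blEmb_apply_same, hr]
  · have h' : i ≠ i₀ := fun hh => h hh.symm
    simp [hY, blEmb_apply_ne h, h]

lemma quad_blEmb
    (hY : ∀ p c : BLCol n σp dx,
      Y p c =
        if h : p.1 = c.1 then
          if Fin.cast (congrArg σp h) p.2.1 = c.2.1 then
            Yblk c.1 c.2.1 (Fin.cast (congrArg dx h) p.2.2) c.2.2
          else 0
        else 0)
    (i : Fin n) (r : Fin (σp i)) (v w : Fin (dx i) → ℝ) :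
    blEmb σp dx i r v ⬝ᵥ (Y *ᵥ blEmb σp dx i r w) = v ⬝ᵥ (Yblk i r *ᵥ w) := by
  rw [Y_mulVec_blEmb hY, blEmb_dot]

lemma kraus_term_s15
    (hY : ∀ p c : BLCol n σp dx,
      Y p c =
        if h : p.1 = c.1 then
          if Fin.cast (congrArg σp h) p.2.1 = c.2.1 then
            Yblk c.1 c.2.1 (Fin.cast (congrArg dx h) p.2.2) c.2.2
          else 0
        else 0)
    {dd : ∀ i : Fin n, Fin (σp i) → ℕ}
    {lam : ∀ i (r : Fin (σp i)), Fin (dd i r) → ℝ}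
    {uu : ∀ i (r : Fin (σp i)), Fin (dd i r) → (Fin (dx i) → ℝ)}
    (hlam : ∀ i r l, 0 < lam i r l)
    (hdec : ∀ i r, Yblk i r = ∑ l, lam i r l • vecMulVec (uu i r l) (uu i r l))
    (i : Fin n) (j : Fin m) (a : Fin (na i j)) (q : Fin (σm j)) (r : Fin (σp i)) :
    blKraus σp dx σm dy na V i j a q r * Y * (blKraus σp dx σm dy na V i j a q r)ᵀ
      = ∑ l : Fin (dd i r),
          vecMulVec (blEmb σm dy j q (V i j a *ᵥ (Real.sqrt (lam i r l) • uu i r l)))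
            (blEmb σm dy j q (V i j a *ᵥ (Real.sqrt (lam i r l) • uu i r l))) := by
  ext p p'
  rw [mul_mul_transpose_apply, Matrix.sum_apply]
  rcases p with ⟨j₀, q₀, s⟩
  rcases p' with ⟨j₁, q₁, s'⟩
  by_cases h0 : j₀ = j
  · subst h0
    by_cases hq0 : q₀ = q
    · subst hq0
      by_cases h1 : j₁ = j₀
      · subst h1
        by_cases hq1 : q₁ = q₀
        · subst hq1
          rw [blKraus_row_eq, blKraus_row_eq, quad_blEmb hY, hdec i r]
          simp only [vecMulVec_apply, blEmb_apply_same, eq_self_iff_true, if_true]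
          rw [sum_mulVec', dotProduct_sum']
          refine Finset.sum_congr rfl fun l _ => ?_
          have hsq : Real.sqrt (lam i r l) * Real.sqrt (lam i r l) = lam i r l :=
            Real.mul_self_sqrt (hlam i r l).le
          have hvmv : vecMulVec (uu i r l) (uu i r l) *ᵥ (fun t => V i j₁ a s' t)
              = ((uu i r l) ⬝ᵥ (fun t => V i j₁ a s' t)) • uu i r l := by
            funext t
            simp only [vecMulVec_apply, Matrix.mulVec, dotProduct, Pi.smul_apply, smul_eq_mul,
              Finset.sum_mul]
            exact Finset.sum_congr rfl fun x _ => by ring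
          have h1 : ∀ z : Fin (dy j₁), (V i j₁ a *ᵥ (Real.sqrt (lam i r l) • uu i r l)) z
              = Real.sqrt (lam i r l) * ((fun t => V i j₁ a z t) ⬝ᵥ uu i r l) := by
            intro z
            simp only [Matrix.mulVec, dotProduct, Pi.smul_apply, smul_eq_mul, Finset.mul_sum]
            exact Finset.sum_congr rfl fun t _ => by ring
          rw [Matrix.smul_mulVec, dotProduct_smul, hvmv, dotProduct_smul, h1 s, h1 s']
          rw [dotProduct_comm (uu i r l)]
          simp only [smul_eq_mul]
          rw [mul_mul_mul_comm, hsq]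
          ring
        · rw [blKraus_row_zero₂ hq1, Matrix.mulVec_zero, dotProduct_zero]
          symm; apply Finset.sum_eq_zero; intro l _
          simp [vecMulVec_apply, blEmb_apply_same, hq1]
      · rw [blKraus_row_zero₁ h1, Matrix.mulVec_zero, dotProduct_zero]
        symm; apply Finset.sum_eq_zero; intro l _
        simp [vecMulVec_apply, blEmb_apply_ne h1]
    · rw [blKraus_row_zero₂ hq0, zero_dotProduct]
      symm; apply Finset.sum_eq_zero; intro l _
      simp [vecMulVec_apply, blEmb_apply_same, hq0]
  · rw [blKraus_row_zero₁ h0, zero_dotProduct]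
    symm; apply Finset.sum_eq_zero; intro l _
    simp [vecMulVec_apply, blEmb_apply_ne h0]

lemma Y_eq_sum_outer
    (hY : ∀ p c : BLCol n σp dx,
      Y p c =
        if h : p.1 = c.1 then
          if Fin.cast (congrArg σp h) p.2.1 = c.2.1 then
            Yblk c.1 c.2.1 (Fin.cast (congrArg dx h) p.2.2) c.2.2
          else 0
        else 0)
    {dd : ∀ i : Fin n, Fin (σp i) → ℕ}
    {lam : ∀ i (r : Fin (σp i)), Fin (dd i r) → ℝ}
    {uu : ∀ i (r : Fin (σp i)), Fin (dd i r) → (Fin (dx i) → ℝ)}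
    (hlam : ∀ i r l, 0 < lam i r l)
    (hdec : ∀ i r, Yblk i r = ∑ l, lam i r l • vecMulVec (uu i r l) (uu i r l)) :
    Y = ∑ k : (Σ i : Fin n, Σ r : Fin (σp i), Fin (dd i r)),
      vecMulVec (blEmb σp dx k.1 k.2.1 (Real.sqrt (lam k.1 k.2.1 k.2.2) • uu k.1 k.2.1 k.2.2))
        (blEmb σp dx k.1 k.2.1 (Real.sqrt (lam k.1 k.2.1 k.2.2) • uu k.1 k.2.1 k.2.2)) := by
  ext p c
  rcases p with ⟨i₀, r₀, s⟩
  rcases c with ⟨i₁, r₁, t⟩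
  rw [Matrix.sum_apply]
  simp only [sum_sigma_univ]
  by_cases h : i₀ = i₁
  · subst h
    by_cases hr : r₀ = r₁
    · subst hr
      rw [Finset.sum_eq_single i₀]
      · rw [Finset.sum_eq_single r₀]
        · have hYb : Y ⟨i₀, (r₀, s)⟩ ⟨i₀, (r₀, t)⟩ = Yblk i₀ r₀ s t := by simp [hY]
          rw [hYb, hdec i₀ r₀, Matrix.sum_apply]
          refine Finset.sum_congr rfl fun l _ => ?_
          have hsq : Real.sqrt (lam i₀ r₀ l) * Real.sqrt (lam i₀ r₀ l) = lam i₀ r₀ l :=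
            Real.mul_self_sqrt (hlam i₀ r₀ l).le
          simp only [vecMulVec_apply, blEmb_apply_same, eq_self_iff_true, if_true,
            Pi.smul_apply, smul_eq_mul, Matrix.smul_apply]
          rw [mul_mul_mul_comm, hsq]
        · intro r' _ hr'
          apply Finset.sum_eq_zero; intro l _
          have hr'' : r₀ ≠ r' := fun hh => hr' hh.symm
          simp [vecMulVec_apply, blEmb_apply_same, hr'']
        · simp
      · intro i' _ hi'
        apply Finset.sum_eq_zero; intro r' _
        apply Finset.sum_eq_zero; intro l _
        have h1 : i₀ ≠ i' := fun hh => hi' hh.symm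
        simp [vecMulVec_apply, blEmb_apply_ne h1]
      · simp
    · have hYz : Y ⟨i₀, (r₀, s)⟩ ⟨i₀, (r₁, t)⟩ = 0 := by simp [hY, hr]
      rw [hYz]
      symm
      apply Finset.sum_eq_zero; intro i' _
      apply Finset.sum_eq_zero; intro r' _
      apply Finset.sum_eq_zero; intro l _
      by_cases hi : i₀ = i'
      · subst hi
        by_cases h2 : r₀ = r'
        · subst h2
          have : r₁ ≠ r₀ := fun hh => hr hh.symm
          simp [vecMulVec_apply, blEmb_apply_same, this]
        · simp [vecMulVec_apply, blEmb_apply_same, h2]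
      · have h1 : i₀ ≠ i' := hi
        simp [vecMulVec_apply, blEmb_apply_ne h1]
  · have hYz : Y ⟨i₀, (r₀, s)⟩ ⟨i₁, (r₁, t)⟩ = 0 := by simp [hY, h]
    rw [hYz]
    symm
    apply Finset.sum_eq_zero; intro i' _
    apply Finset.sum_eq_zero; intro r' _
    apply Finset.sum_eq_zero; intro l _
    by_cases hi : i₀ = i'
    · subst hi
      have h1 : i₁ ≠ i₀ := fun hh => h hh.symm
      simp [vecMulVec_apply, blEmb_apply_ne h1]
    · simp [vecMulVec_apply, blEmb_apply_ne hi]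

lemma blCPO_eq_sum_outer
    (hY : ∀ p c : BLCol n σp dx,
      Y p c =
        if h : p.1 = c.1 then
          if Fin.cast (congrArg σp h) p.2.1 = c.2.1 then
            Yblk c.1 c.2.1 (Fin.cast (congrArg dx h) p.2.2) c.2.2
          else 0
        else 0)
    {dd : ∀ i : Fin n, Fin (σp i) → ℕ}
    {lam : ∀ i (r : Fin (σp i)), Fin (dd i r) → ℝ}
    {uu : ∀ i (r : Fin (σp i)), Fin (dd i r) → (Fin (dx i) → ℝ)}
    (hlam : ∀ i r l, 0 < lam i r l)
    (hdec : ∀ i r, Yblk i r = ∑ l, lam i r l • vecMulVec (uu i r l) (uu i r l)) :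
    blCPO σp dx σm dy na V Y
      = ∑ k : (Σ i : Fin n, Σ j : Fin m, Σ a : Fin (na i j), Σ q : Fin (σm j),
              Σ r : Fin (σp i), Fin (dd i r)),
          vecMulVec
            (blEmb σm dy k.2.1 k.2.2.2.1
              (V k.1 k.2.1 k.2.2.1 *ᵥ
                (Real.sqrt (lam k.1 k.2.2.2.2.1 k.2.2.2.2.2) • uu k.1 k.2.2.2.2.1 k.2.2.2.2.2)))
            (blEmb σm dy k.2.1 k.2.2.2.1
              (V k.1 k.2.1 k.2.2.1 *ᵥ
                (Real.sqrt (lam k.1 k.2.2.2.2.1 k.2.2.2.2.2) • uu k.1 k.2.2.2.2.1 k.2.2.2.2.2))) := by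
  unfold blCPO
  simp only [sum_sigma_univ]
  refine Finset.sum_congr rfl fun i _ => Finset.sum_congr rfl fun j _ =>
    Finset.sum_congr rfl fun a _ => Finset.sum_congr rfl fun q _ =>
    Finset.sum_congr rfl fun r _ => ?_
  exact kraus_term_s15 hY hlam hdec i j a q r

end Main

set_option maxHeartbeats 2000000

theorem stmt15 {n m : ℕ} (σp dx : Fin n → ℕ) (σm dy : Fin m → ℕ)
    (hσp : ∀ i, 0 < σp i) (hσm : ∀ j, 0 < σm j)
    (hbal : ∑ i, σp i * dx i = ∑ j, σm j * dy j)
    (na : Fin n → Fin m → ℕ)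
    (V : ∀ (i : Fin n) (j : Fin m), Fin (na i j) → Matrix (Fin (dy j)) (Fin (dx i)) ℝ)
    (Y : Matrix (BLCol n σp dx) (BLCol n σp dx) ℝ) (hpsd : Y.PosSemidef)
    (Yblk : ∀ i : Fin n, Fin (σp i) → Matrix (Fin (dx i)) (Fin (dx i)) ℝ)
    (hY : ∀ p c : BLCol n σp dx,
      Y p c =
        if h : p.1 = c.1 then
          if Fin.cast (congrArg σp h) p.2.1 = c.2.1 then
            Yblk c.1 c.2.1 (Fin.cast (congrArg dx h) p.2.2) c.2.2
          else 0
        else 0)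
    (dd : ∀ i : Fin n, Fin (σp i) → ℕ)
    (lam : ∀ i (r : Fin (σp i)), Fin (dd i r) → ℝ)
    (uu : ∀ i (r : Fin (σp i)), Fin (dd i r) → (Fin (dx i) → ℝ))
    (hlam : ∀ i r l, 0 < lam i r l)
    (hortho : ∀ i r (l l' : Fin (dd i r)),
      dotProduct (uu i r l) (uu i r l') = if l = l' then (1 : ℝ) else 0)
    (hdec : ∀ i r, Yblk i r = ∑ l, lam i r l • vecMulVec (uu i r l) (uu i r l))
    (Wx : ∀ i : Fin n, Submodule ℝ (Fin (dx i) → ℝ))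
    (hWx : ∀ i, Wx i =
      Submodule.span ℝ {x | ∃ (r : Fin (σp i)) (l : Fin (dd i r)),
        x = Real.sqrt (lam i r l) • uu i r l})
    (Wy : ∀ j : Fin m, Submodule ℝ (Fin (dy j) → ℝ))
    (hWy : ∀ j, Wy j = ⨆ i : Fin n, ⨆ a : Fin (na i j), (Wx i).map (V i j a).mulVecLin) :
    (∀ i j (a : Fin (na i j)), (Wx i).map (V i j a).mulVecLin ≤ Wy j) ∧
      (Y.rank : ℤ) - (blCPO σp dx σm dy na V Y).rank ≤
        (∑ i, (σp i : ℤ) * Module.finrank ℝ (Wx i)) -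
          (∑ j, (σm j : ℤ) * Module.finrank ℝ (Wy j)) := by
  classical
  have part1 : ∀ i j (a : Fin (na i j)), (Wx i).map (V i j a).mulVecLin ≤ Wy j := by
    intro i j a
    rw [hWy j]
    exact le_iSup_of_le i (le_iSup_of_le a le_rfl)
  refine ⟨part1, ?_⟩
  -- upper bound for rank Y
  have hrY : LinearMap.range (Matrix.mulVecLin Y)
      = Submodule.span ℝ (Set.range (fun k : (Σ i : Fin n, Σ r : Fin (σp i), Fin (dd i r)) =>
          blEmb σp dx k.1 k.2.1 (Real.sqrt (lam k.1 k.2.1 k.2.2) • uu k.1 k.2.1 k.2.2))) := by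
    rw [show Y = _ from Y_eq_sum_outer hY hlam hdec]
    exact range_sum_outer _
  have h1 : Y.rank ≤ ∑ i, σp i * Module.finrank ℝ (Wx i) := by
    have hle : Submodule.span ℝ (Set.range (fun k : (Σ i : Fin n, Σ r : Fin (σp i), Fin (dd i r)) =>
          blEmb σp dx k.1 k.2.1 (Real.sqrt (lam k.1 k.2.1 k.2.2) • uu k.1 k.2.1 k.2.2)))
        ≤ ⨆ k : Σ i : Fin n, Fin (σp i), (Wx k.1).map (blEmbL σp dx k.1 k.2) := by
      rw [Submodule.span_le]
      rintro x ⟨k, rfl⟩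
      refine Submodule.mem_iSup_of_mem ⟨k.1, k.2.1⟩ ?_
      refine ⟨Real.sqrt (lam k.1 k.2.1 k.2.2) • uu k.1 k.2.1 k.2.2, ?_, rfl⟩
      rw [hWx]
      exact Submodule.subset_span ⟨k.2.1, k.2.2, rfl⟩
    calc Y.rank
        = Module.finrank ℝ ↥(LinearMap.range (Matrix.mulVecLin Y)) := rfl
      _ = Module.finrank ℝ
            ↥(Submodule.span ℝ (Set.range (fun k : (Σ i : Fin n, Σ r : Fin (σp i), Fin (dd i r)) =>
              blEmb σp dx k.1 k.2.1 (Real.sqrt (lam k.1 k.2.1 k.2.2) • uu k.1 k.2.1 k.2.2)))) := by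
          rw [hrY]
      _ ≤ Module.finrank ℝ
            ↥(⨆ k : Σ i : Fin n, Fin (σp i), (Wx k.1).map (blEmbL σp dx k.1 k.2)) :=
          Submodule.finrank_mono hle
      _ ≤ ∑ k : Σ i : Fin n, Fin (σp i),
            Module.finrank ℝ ↥((Wx k.1).map (blEmbL σp dx k.1 k.2)) := finrank_iSup_le _
      _ ≤ ∑ k : Σ i : Fin n, Fin (σp i), Module.finrank ℝ ↥(Wx k.1) :=
          Finset.sum_le_sum fun k _ => Submodule.finrank_map_le _ _
      _ = ∑ i, σp i * Module.finrank ℝ (Wx i) := by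
          rw [sum_sigma_univ]
          exact Finset.sum_congr rfl fun i _ => by
            rw [Finset.sum_const_nat (m := Module.finrank ℝ ↥(Wx i)) (fun _ _ => rfl), Finset.card_univ, Fintype.card_fin]
  -- lower bound for rank of blCPO
  have hrT : LinearMap.range (Matrix.mulVecLin (blCPO σp dx σm dy na V Y))
      = Submodule.span ℝ (Set.range (fun k : (Σ i : Fin n, Σ j : Fin m, Σ a : Fin (na i j),
            Σ q : Fin (σm j), Σ r : Fin (σp i), Fin (dd i r)) =>
          blEmb σm dy k.2.1 k.2.2.2.1
            (V k.1 k.2.1 k.2.2.1 *ᵥ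
              (Real.sqrt (lam k.1 k.2.2.2.2.1 k.2.2.2.2.2) • uu k.1 k.2.2.2.2.1 k.2.2.2.2.2)))) := by
    rw [show blCPO σp dx σm dy na V Y = _ from blCPO_eq_sum_outer hY hlam hdec]
    exact range_sum_outer _
  have hWy2 : ∀ j, Wy j = Submodule.span ℝ
      {y | ∃ i : Fin n, ∃ a : Fin (na i j), ∃ r : Fin (σp i), ∃ l : Fin (dd i r),
        y = V i j a *ᵥ (Real.sqrt (lam i r l) • uu i r l)} := by
    intro j
    rw [hWy j]
    have hmap : ∀ (i : Fin n) (a : Fin (na i j)), (Wx i).map (V i j a).mulVecLin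
        = Submodule.span ℝ ((V i j a).mulVecLin ''
            {x | ∃ (r : Fin (σp i)) (l : Fin (dd i r)),
              x = Real.sqrt (lam i r l) • uu i r l}) := by
      intro i a
      rw [hWx i, Submodule.map_span]
    simp_rw [hmap, ← Submodule.span_iUnion₂]
    congr 1
    ext y
    simp only [Set.mem_iUnion, Set.mem_image, Set.mem_setOf_eq, Matrix.mulVecLin_apply]
    constructor
    · rintro ⟨i, a, x, ⟨r, l, rfl⟩, rfl⟩
      exact ⟨i, a, r, l, rfl⟩
    · rintro ⟨i, a, r, l, rfl⟩
      exact ⟨i, a, _, ⟨r, l, rfl⟩, rfl⟩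
  have h2 : ∑ j, σm j * Module.finrank ℝ (Wy j) ≤ (blCPO σp dx σm dy na V Y).rank := by
    have key : ∑ k : Σ j : Fin m, Fin (σm j), Module.finrank ℝ ↥(Wy k.1)
        ≤ Module.finrank ℝ
            ↥(Submodule.span ℝ (Set.range (fun k : (Σ i : Fin n, Σ j : Fin m, Σ a : Fin (na i j),
                Σ q : Fin (σm j), Σ r : Fin (σp i), Fin (dd i r)) =>
              blEmb σm dy k.2.1 k.2.2.2.1
                (V k.1 k.2.1 k.2.2.1 *ᵥ
                  (Real.sqrt (lam k.1 k.2.2.2.2.1 k.2.2.2.2.2) •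
                    uu k.1 k.2.2.2.2.1 k.2.2.2.2.2))))) := by
      refine sum_finrank_le_of_maps (κ := Σ j : Fin m, Fin (σm j))
        (M := fun k => Fin (dy k.1) → ℝ)
        (fun k => blEmbL σm dy k.1 k.2) (fun k => Wy k.1) _ ?_ ?_
      · rintro ⟨j, q⟩
        dsimp only
        rw [hWy2 j, Submodule.map_span, Submodule.span_le]
        rintro y ⟨x, ⟨i, a, r, l, rfl⟩, rfl⟩
        exact Submodule.subset_span ⟨⟨i, j, a, q, r, l⟩, rfl⟩
      · rintro x hx ⟨j, q⟩
        funext s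
        have hs : ∑ j' : Fin m, ∑ q' : Fin (σm j'),
            blEmb σm dy j' q' (x ⟨j', q'⟩) ⟨j, (q, s)⟩ = x ⟨j, q⟩ s := by
          rw [Finset.sum_eq_single j]
          · rw [Finset.sum_eq_single q]
            · simp [blEmb_apply_same]
            · intro q' _ hq'
              have : q ≠ q' := fun hh => hq' hh.symm
              simp [blEmb_apply_same, this]
            · simp
          · intro j' _ hj'
            apply Finset.sum_eq_zero; intro q' _
            have : j ≠ j' := fun hh => hj' hh.symm
            simp [blEmb_apply_ne this]
          · simp
        have h0 := congrFun hx ⟨j, (q, s)⟩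
        simp only [Finset.sum_apply, Pi.zero_apply, blEmbL_apply] at h0
        rw [sum_sigma_univ (f := fun k : Σ j : Fin m, Fin (σm j) =>
          blEmb σm dy k.1 k.2 (x k) ⟨j, (q, s)⟩)] at h0
        rw [hs] at h0
        simpa using h0
    calc ∑ j, σm j * Module.finrank ℝ (Wy j)
        = ∑ k : Σ j : Fin m, Fin (σm j), Module.finrank ℝ ↥(Wy k.1) := by
          rw [sum_sigma_univ]
          exact Finset.sum_congr rfl fun j _ => by
            rw [Finset.sum_const_nat (m := Module.finrank ℝ ↥(Wy j)) (fun _ _ => rfl), Finset.card_univ, Fintype.card_fin]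
      _ ≤ _ := key
      _ = (blCPO σp dx σm dy na V Y).rank := by rw [Matrix.rank, hrT]
  have hx1 : (Y.rank : ℤ) ≤ ∑ i, (σp i : ℤ) * (Module.finrank ℝ (Wx i) : ℤ) := by
    exact_mod_cast h1
  have hx2 : (∑ j, (σm j : ℤ) * (Module.finrank ℝ (Wy j) : ℤ))
      ≤ ((blCPO σp dx σm dy na V Y).rank : ℤ) := by
    exact_mod_cast h2
  linarith
end

section
/- Let Q be a bipartite quiver and (V, σ) a quiver datum with σ · dim V = 0, σ positive on sources and negative on sinks, with Kraus operators A_{V,σ}. Then disc(V, σ) = disc(A_{V,σ}), i.e. the maximum of σ · dim W over subrepresentations W ≤ V equals the maximum c such that there exists a c-shrunk subspace for A_{V,σ}. -/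
open Matrix BigOperators
open scoped Classical

section SigmaBlock

variable {k : ℕ} (c d : Fin k → ℕ)

/-- Projection onto the `(j,q)` block. -/
def sigProj (j : Fin k) (q : Fin (c j)) :
    ((Σ j' : Fin k, Fin (c j') × Fin (d j')) → ℝ) →ₗ[ℝ] (Fin (d j) → ℝ) where
  toFun g := fun s => g ⟨j, (q, s)⟩
  map_add' _ _ := rfl
  map_smul' _ _ := rfl

/-- Embedding of the `(j,q)` block. -/
noncomputable def sigEmb (j : Fin k) (q : Fin (c j)) :
    (Fin (d j) → ℝ) →ₗ[ℝ] ((Σ j' : Fin k, Fin (c j') × Fin (d j')) → ℝ) where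
  toFun v := fun p =>
    if h : p.1 = j then
      (if Fin.cast (congrArg c h) p.2.1 = q then v (Fin.cast (congrArg d h) p.2.2) else 0)
    else 0
  map_add' u v := by
    funext p; obtain ⟨j', q', s⟩ := p
    simp only [Pi.add_apply]
    by_cases h : j' = j
    · subst h; rw [dif_pos rfl, dif_pos rfl, dif_pos rfl]; split_ifs <;> simp
    · rw [dif_neg h, dif_neg h, dif_neg h]; simp
  map_smul' a v := by
    funext p; obtain ⟨j', q', s⟩ := p
    simp only [RingHom.id_apply, Pi.smul_apply]
    by_cases h : j' = j
    · subst h; rw [dif_pos rfl, dif_pos rfl]; split_ifs <;> simp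
    · rw [dif_neg h, dif_neg h]; simp

@[simp] lemma sigProj_apply (j : Fin k) (q : Fin (c j)) (g) (s) :
    sigProj c d j q g s = g ⟨j, (q, s)⟩ := rfl

lemma sigProj_sigEmb (j : Fin k) (q : Fin (c j)) (v : Fin (d j) → ℝ) :
    sigProj c d j q (sigEmb c d j q v) = v := by
  funext s
  simp [sigProj, sigEmb]

/-- Block product submodule. -/
def sigmaPi (W : ∀ j, Submodule ℝ (Fin (d j) → ℝ)) :
    Submodule ℝ ((Σ j' : Fin k, Fin (c j') × Fin (d j')) → ℝ) where
  carrier := {g | ∀ j q, sigProj c d j q g ∈ W j}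
  add_mem' hg hh j q := by simpa using (W j).add_mem (hg j q) (hh j q)
  zero_mem' j q := by simpa using (W j).zero_mem
  smul_mem' a g hg j q := by simpa using (W j).smul_mem a (hg j q)

lemma mem_sigmaPi {W : ∀ j, Submodule ℝ (Fin (d j) → ℝ)} {g} :
    g ∈ sigmaPi c d W ↔ ∀ j q, sigProj c d j q g ∈ W j := Iff.rfl

end SigmaBlock

section SigmaBlock2
variable {k : ℕ} (c d : Fin k → ℕ)

noncomputable def sigmaPiEquiv (W : ∀ j, Submodule ℝ (Fin (d j) → ℝ)) :
    (sigmaPi c d W) ≃ₗ[ℝ] ∀ j : Fin k, Fin (c j) → (W j) where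
  toFun g := fun j q => ⟨sigProj c d j q g.1, g.2 j q⟩
  map_add' g h := rfl
  map_smul' a g := rfl
  invFun F := ⟨fun p => (F p.1 p.2.1 : Fin (d p.1) → ℝ) p.2.2, fun j q => (F j q).2⟩
  left_inv g := rfl
  right_inv F := rfl

lemma finrank_sigmaPi (W : ∀ j, Submodule ℝ (Fin (d j) → ℝ)) :
    Module.finrank ℝ (sigmaPi c d W) = ∑ j, c j * Module.finrank ℝ (W j) := by
  rw [(sigmaPiEquiv c d W).finrank_eq, Module.finrank_pi_fintype]
  refine Finset.sum_congr rfl fun j _ => ?_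
  rw [Module.finrank_pi_fintype]
  simp [Finset.sum_const, mul_comm]

lemma sum_sigEmb_sigProj (g : (Σ j' : Fin k, Fin (c j') × Fin (d j')) → ℝ) :
    ∑ j, ∑ q, sigEmb c d j q (sigProj c d j q g) = g := by
  funext p
  obtain ⟨j₀, q₀, s₀⟩ := p
  simp only [Finset.sum_apply]
  rw [Finset.sum_eq_single j₀]
  · rw [Finset.sum_eq_single q₀]
    · simp [sigEmb]
    · intro q _ hq
      simp [sigEmb, hq, Ne.symm hq]
    · simp
  · intro j _ hj
    apply Finset.sum_eq_zero; intro q _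
    simp only [sigEmb, LinearMap.coe_mk, AddHom.coe_mk]
    exact dif_neg fun e => hj e.symm
  · simp

lemma sigEmb_mem_sigmaPi (W : ∀ j, Submodule ℝ (Fin (d j) → ℝ)) (j : Fin k) (q : Fin (c j))
    {v : Fin (d j) → ℝ} (hv : v ∈ W j) : sigEmb c d j q v ∈ sigmaPi c d W := by
  intro j' q'
  by_cases h : j' = j
  · subst h
    have : sigProj c d j' q' (sigEmb c d j' q v) = if q' = q then v else 0 := by
      funext s
      by_cases hq : q' = q <;> simp [sigProj, sigEmb, hq]
    rw [this]; split_ifs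
    exacts [hv, (W j').zero_mem]
  · have : sigProj c d j' q' (sigEmb c d j q v) = 0 := by
      funext s; simp [sigProj, sigEmb, h]
    rw [this]; exact (W j').zero_mem

lemma sigmaPi_eq_iSup (W : ∀ j, Submodule ℝ (Fin (d j) → ℝ)) :
    sigmaPi c d W = ⨆ j, ⨆ q, (W j).map (sigEmb c d j q) := by
  apply le_antisymm
  · intro g hg
    rw [← sum_sigEmb_sigProj c d g]
    exact Submodule.sum_mem _ fun j _ => Submodule.sum_mem _ fun q _ =>
      Submodule.mem_iSup_of_mem j (Submodule.mem_iSup_of_mem q ⟨_, hg j q, rfl⟩)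
  · refine iSup_le fun j => iSup_le fun q => ?_
    rintro _ ⟨v, hv, rfl⟩
    exact sigEmb_mem_sigmaPi c d W j q hv

end SigmaBlock2

section Kraus
variable {n m : ℕ} (σp dx : Fin n → ℕ) (σm dy : Fin m → ℕ)
    (na : Fin n → Fin m → ℕ)
    (V : ∀ (i : Fin n) (j : Fin m), Fin (na i j) → Matrix (Fin (dy j)) (Fin (dx i)) ℝ)

lemma blKraus_apply_same (i : Fin n) (j : Fin m) (a : Fin (na i j)) (q : Fin (σm j))
    (r : Fin (σp i)) (q' : Fin (σm j)) (s : Fin (dy j)) (r' : Fin (σp i)) (t : Fin (dx i)) :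
    blKraus σp dx σm dy na V i j a q r ⟨j, (q', s)⟩ ⟨i, (r', t)⟩ =
      if q' = q ∧ r' = r then V i j a s t else 0 := by
  simp [blKraus]

lemma blKraus_apply_ne₁ (i : Fin n) (j : Fin m) (a : Fin (na i j)) (q : Fin (σm j))
    (r : Fin (σp i)) {j' : Fin m} (h : j' ≠ j) (q' : Fin (σm j')) (s : Fin (dy j'))
    (cc : BLCol n σp dx) :
    blKraus σp dx σm dy na V i j a q r ⟨j', (q', s)⟩ cc = 0 := by
  simp only [blKraus]
  rw [dif_neg]
  exact fun e => h e.1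

lemma blKraus_apply_ne₂ (i : Fin n) (j : Fin m) (a : Fin (na i j)) (q : Fin (σm j))
    (r : Fin (σp i)) (p : BLRow m σm dy) {i' : Fin n} (h : i' ≠ i) (r' : Fin (σp i'))
    (t : Fin (dx i')) :
    blKraus σp dx σm dy na V i j a q r p ⟨i', (r', t)⟩ = 0 := by
  simp only [blKraus]
  rw [dif_neg]
  exact fun e => h e.2

lemma blKraus_mulVecLin (i : Fin n) (j : Fin m) (a : Fin (na i j)) (q : Fin (σm j))
    (r : Fin (σp i)) :
    (blKraus σp dx σm dy na V i j a q r).mulVecLin =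
      (sigEmb σm dy j q) ∘ₗ (V i j a).mulVecLin ∘ₗ (sigProj σp dx i r) := by
  apply LinearMap.ext; intro f
  funext p
  obtain ⟨j', q', s⟩ := p
  rw [Matrix.mulVecLin_apply]
  show ∑ cc : BLCol n σp dx, blKraus σp dx σm dy na V i j a q r ⟨j', (q', s)⟩ cc * f cc = _
  by_cases hj : j' = j
  · subst hj
    rw [← Finset.univ_sigma_univ, Finset.sum_sigma]
    rw [Finset.sum_eq_single i]
    · rw [Fintype.sum_prod_type]
      have hrhs : ((sigEmb σm dy j' q) ∘ₗ (V i j' a).mulVecLin ∘ₗ (sigProj σp dx i r)) f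
          ⟨j', (q', s)⟩ =
          if q' = q then ∑ t, V i j' a s t * f ⟨i, (r, t)⟩ else 0 := by
        by_cases hq : q' = q <;>
          simp [sigEmb, hq, Matrix.mulVecLin_apply, Matrix.mulVec, dotProduct, sigProj]
      rw [hrhs]
      rw [Finset.sum_eq_single r]
      · by_cases hq : q' = q
        · simp [blKraus_apply_same, hq]
        · simp [blKraus_apply_same, hq]
      · intro r' _ hr
        apply Finset.sum_eq_zero; intro t _
        rw [blKraus_apply_same]
        simp [hr]
      · simp
    · intro i' _ hi
      apply Finset.sum_eq_zero; intro x _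
      rw [show (⟨i', x⟩ : BLCol n σp dx) = ⟨i', (x.1, x.2)⟩ from rfl,
        blKraus_apply_ne₂ σp dx σm dy na V i j' a q r _ hi, zero_mul]
    · simp
  · rw [Finset.sum_eq_zero, eq_comm]
    · show sigEmb σm dy j q _ ⟨j', (q', s)⟩ = 0
      simp only [sigEmb, LinearMap.coe_mk, AddHom.coe_mk]
      exact dif_neg hj
    · intro cc _
      rw [blKraus_apply_ne₁ σp dx σm dy na V i j a q r hj, zero_mul]

end Kraus

/-- `disc(V,σ) = disc(A_{V,σ})`: the maximum of `σ · dim W` over subrepresentations `W ≤ V`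
equals the maximum `c` for which a `c`-shrunk subspace for the Kraus operators exists;
stated via equality of the corresponding sets of lower bounds. -/
theorem stmt16 {n m : ℕ} (σp dx : Fin n → ℕ) (σm dy : Fin m → ℕ)
    (hσp : ∀ i, 0 < σp i) (hσm : ∀ j, 0 < σm j)
    (hbal : ∑ i, σp i * dx i = ∑ j, σm j * dy j)
    (na : Fin n → Fin m → ℕ)
    (V : ∀ (i : Fin n) (j : Fin m), Fin (na i j) → Matrix (Fin (dy j)) (Fin (dx i)) ℝ) :
    ∀ z : ℤ,
      (∃ (Wx : ∀ i : Fin n, Submodule ℝ (Fin (dx i) → ℝ))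
          (Wy : ∀ j : Fin m, Submodule ℝ (Fin (dy j) → ℝ)),
          (∀ i j (a : Fin (na i j)), (Wx i).map (V i j a).mulVecLin ≤ Wy j) ∧
          z ≤ (∑ i, (σp i : ℤ) * Module.finrank ℝ (Wx i)) -
                (∑ j, (σm j : ℤ) * Module.finrank ℝ (Wy j))) ↔
      (∃ U : Submodule ℝ (BLCol n σp dx → ℝ),
          z ≤ (Module.finrank ℝ U : ℤ) -
            Module.finrank ℝ
              (⨆ i : Fin n, ⨆ j : Fin m, ⨆ a : Fin (na i j),
                ⨆ q : Fin (σm j), ⨆ r : Fin (σp i),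
                  U.map (blKraus σp dx σm dy na V i j a q r).mulVecLin :
                Submodule ℝ (BLRow m σm dy → ℝ))) := by
  intro z
  have hK : ∀ (U : Submodule ℝ (BLCol n σp dx → ℝ)) i j a q r,
      U.map (blKraus σp dx σm dy na V i j a q r).mulVecLin =
        (((U.map (sigProj σp dx i r)).map (V i j a).mulVecLin).map (sigEmb σm dy j q)) := by
    intro U i j a q r
    rw [blKraus_mulVecLin, Submodule.map_comp, Submodule.map_comp]
  constructor
  · rintro ⟨Wx, Wy, hsub, hz⟩
    refine ⟨sigmaPi σp dx Wx, ?_⟩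
    have hU : Module.finrank ℝ (sigmaPi σp dx Wx) = ∑ i, σp i * Module.finrank ℝ (Wx i) :=
      finrank_sigmaPi _ _ _
    have hS : (⨆ i : Fin n, ⨆ j : Fin m, ⨆ a : Fin (na i j), ⨆ q : Fin (σm j), ⨆ r : Fin (σp i),
        (sigmaPi σp dx Wx).map (blKraus σp dx σm dy na V i j a q r).mulVecLin :
        Submodule ℝ (BLRow m σm dy → ℝ)) ≤ sigmaPi σm dy Wy := by
      refine iSup_le fun i => iSup_le fun j => iSup_le fun a => iSup_le fun q =>
        iSup_le fun r => ?_
      rw [hK]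
      have h1 : (sigmaPi σp dx Wx).map (sigProj σp dx i r) ≤ Wx i := by
        rintro _ ⟨g, hg, rfl⟩; exact hg i r
      have h2 : ((sigmaPi σp dx Wx).map (sigProj σp dx i r)).map (V i j a).mulVecLin ≤ Wy j :=
        le_trans (Submodule.map_mono h1) (hsub i j a)
      refine le_trans (Submodule.map_mono h2) ?_
      rintro _ ⟨v, hv, rfl⟩
      exact sigEmb_mem_sigmaPi _ _ _ j q hv
    have hS' : Module.finrank ℝ
        (⨆ i : Fin n, ⨆ j : Fin m, ⨆ a : Fin (na i j), ⨆ q : Fin (σm j), ⨆ r : Fin (σp i),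
          (sigmaPi σp dx Wx).map (blKraus σp dx σm dy na V i j a q r).mulVecLin :
          Submodule ℝ (BLRow m σm dy → ℝ)) ≤ ∑ j, σm j * Module.finrank ℝ (Wy j) := by
      rw [← finrank_sigmaPi σm dy Wy]
      exact Submodule.finrank_mono hS
    have hA : (Module.finrank ℝ (sigmaPi σp dx Wx) : ℤ) =
        ∑ i, (σp i : ℤ) * Module.finrank ℝ (Wx i) := by
      rw [hU]; push_cast; ring
    have hB : (Module.finrank ℝ
        (⨆ i : Fin n, ⨆ j : Fin m, ⨆ a : Fin (na i j), ⨆ q : Fin (σm j), ⨆ r : Fin (σp i),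
          (sigmaPi σp dx Wx).map (blKraus σp dx σm dy na V i j a q r).mulVecLin :
          Submodule ℝ (BLRow m σm dy → ℝ)) : ℤ) ≤
        ∑ j, (σm j : ℤ) * Module.finrank ℝ (Wy j) := by
      calc (Module.finrank ℝ _ : ℤ) ≤ ((∑ j, σm j * Module.finrank ℝ (Wy j) : ℕ) : ℤ) := by
            exact_mod_cast hS'
        _ = ∑ j, (σm j : ℤ) * Module.finrank ℝ (Wy j) := by push_cast; ring
    linarith
  · rintro ⟨U, hz⟩
    refine ⟨fun i => ⨆ r, U.map (sigProj σp dx i r),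
      fun j => ⨆ i, ⨆ a, (⨆ r, U.map (sigProj σp dx i r)).map (V i j a).mulVecLin,
      fun i j a => le_iSup_of_le i (le_iSup_of_le a le_rfl), ?_⟩
    have hUle : U ≤ sigmaPi σp dx (fun i => ⨆ r, U.map (sigProj σp dx i r)) := by
      intro g hg i r
      exact Submodule.mem_iSup_of_mem r ⟨g, hg, rfl⟩
    have hU : Module.finrank ℝ U ≤
        ∑ i, σp i * Module.finrank ℝ (⨆ r, U.map (sigProj σp dx i r) : Submodule ℝ (Fin (dx i) → ℝ)) := by
      rw [← finrank_sigmaPi σp dx]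
      exact Submodule.finrank_mono hUle
    have hSeq : (⨆ i : Fin n, ⨆ j : Fin m, ⨆ a : Fin (na i j), ⨆ q : Fin (σm j),
        ⨆ r : Fin (σp i), U.map (blKraus σp dx σm dy na V i j a q r).mulVecLin :
        Submodule ℝ (BLRow m σm dy → ℝ)) =
        sigmaPi σm dy (fun j => ⨆ i, ⨆ a,
          (⨆ r, U.map (sigProj σp dx i r)).map (V i j a).mulVecLin) := by
      apply le_antisymm
      · refine iSup_le fun i => iSup_le fun j => iSup_le fun a => iSup_le fun q =>
          iSup_le fun r => ?_
        rw [hK]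
        have h2 : ((U.map (sigProj σp dx i r)).map (V i j a).mulVecLin) ≤
            ⨆ i, ⨆ a, (⨆ r, U.map (sigProj σp dx i r)).map (V i j a).mulVecLin :=
          le_iSup_of_le i (le_iSup_of_le a (Submodule.map_mono (le_iSup_of_le r le_rfl)))
        refine le_trans (Submodule.map_mono h2) ?_
        rintro _ ⟨v, hv, rfl⟩
        exact sigEmb_mem_sigmaPi _ _ _ j q hv
      · rw [sigmaPi_eq_iSup]
        refine iSup_le fun j => iSup_le fun q => ?_
        simp only [Submodule.map_iSup]
        refine iSup_le fun i => iSup_le fun a => iSup_le fun r => ?_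
        rw [← hK]
        exact le_iSup_of_le i (le_iSup_of_le j (le_iSup_of_le a
          (le_iSup_of_le q (le_iSup_of_le r le_rfl))))
    have hS : Module.finrank ℝ
        (⨆ i : Fin n, ⨆ j : Fin m, ⨆ a : Fin (na i j), ⨆ q : Fin (σm j),
          ⨆ r : Fin (σp i), U.map (blKraus σp dx σm dy na V i j a q r).mulVecLin :
          Submodule ℝ (BLRow m σm dy → ℝ)) =
        ∑ j, σm j * Module.finrank ℝ (⨆ i, ⨆ a,
          (⨆ r, U.map (sigProj σp dx i r)).map (V i j a).mulVecLin :
          Submodule ℝ (Fin (dy j) → ℝ)) := by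
      rw [hSeq, finrank_sigmaPi]
    have hA : (Module.finrank ℝ U : ℤ) ≤
        ∑ i, (σp i : ℤ) * Module.finrank ℝ (⨆ r, U.map (sigProj σp dx i r) : Submodule ℝ (Fin (dx i) → ℝ)) := by
      calc (Module.finrank ℝ U : ℤ) ≤
          ((∑ i, σp i * Module.finrank ℝ (⨆ r, U.map (sigProj σp dx i r) : Submodule ℝ (Fin (dx i) → ℝ)) : ℕ) : ℤ) := by
            exact_mod_cast hU
        _ = _ := by push_cast; ring
    have hB : (Module.finrank ℝ
        (⨆ i : Fin n, ⨆ j : Fin m, ⨆ a : Fin (na i j), ⨆ q : Fin (σm j),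
          ⨆ r : Fin (σp i), U.map (blKraus σp dx σm dy na V i j a q r).mulVecLin :
          Submodule ℝ (BLRow m σm dy → ℝ)) : ℤ) =
        ∑ j, (σm j : ℤ) * Module.finrank ℝ (⨆ i, ⨆ a,
          (⨆ r, U.map (sigProj σp dx i r)).map (V i j a).mulVecLin :
          Submodule ℝ (Fin (dy j) → ℝ)) := by
      rw [hS]; push_cast; ring
    linarith
end

section
/- In the SRSR setup, suppose (T'_1,...,T'_m) is a tuple of subspaces T'_j ≤ ℝ^{d_j} with corresponding subrepresentation W' of V_X. Let Y' be the N×N diagonal 0/1 matrix whose r-th diagonal entry is 1 iff r ∈ ((i−1)D, iD] for some i with v_i^j ∈ T'_j for all j. Then Y' is positive semi-definite and rank(Y') − rank(T_X(Y')) ≥ σ_0 · dim W' = D·|I_{T'}| − n·Σ_j dim T'_j, where I_{T'} = {i : v_i^j ∈ T'_j ∀j}. -/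
open Matrix BigOperators
open scoped Classical

section Aux

variable {n m D : ℕ} {d : Fin m → ℕ}

lemma srsrKraus_apply (v : ∀ (_ : Fin n) (j : Fin m), Fin (d j) → ℝ)
    (i : Fin n) (j : Fin m) (q : Fin n) (r : Fin D)
    (p : SrsrRow n m d) (a : SrsrCol n D) :
    srsrKraus d v i j q r p a =
      if p.1 = j ∧ p.2.1 = q ∧ a.1 = i ∧ a.2 = r then v i p.1 p.2.2 else 0 := by
  unfold srsrKraus
  split_ifs with h
  · obtain ⟨h1, -⟩ := h
    subst h1
    rfl
  · rfl

lemma srsrKraus_eq_zero (v : ∀ (_ : Fin n) (j : Fin m), Fin (d j) → ℝ)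
    (i : Fin n) (j : Fin m) (q : Fin n) (r : Fin D)
    (p : SrsrRow n m d) (a : SrsrCol n D) (ha : a ≠ (i, r)) :
    srsrKraus d v i j q r p a = 0 := by
  rw [srsrKraus_apply, if_neg]
  rintro ⟨-, -, h3, h4⟩
  exact ha (Prod.ext h3 h4)

lemma srsr_ind_sum {α : Type*} [Fintype α] [DecidableEq α] (a b : α) :
    ∑ x : α, (if a = x then (1:ℝ) else 0) * (if b = x then 1 else 0) =
      if a = b then 1 else 0 := by
  simp only [ite_mul, one_mul, zero_mul]
  rw [Fintype.sum_ite_eq]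
  exact if_congr eq_comm rfl rfl

lemma srsr_term (v : ∀ (_ : Fin n) (j : Fin m), Fin (d j) → ℝ)
    (w : SrsrCol n D → ℝ) (I' : Finset (Fin n))
    (hw : w = fun b => if b.1 ∈ I' then (1 : ℝ) else 0)
    (i : Fin n) (j : Fin m) (q : Fin n) (r : Fin D)
    (p c : SrsrRow n m d) :
    (srsrKraus d v i j q r * Matrix.diagonal w * (srsrKraus d v i j q r)ᵀ) p c =
      (if i ∈ I' then v i p.1 p.2.2 * v i c.1 c.2.2 else 0) *
        (((if p.1 = j then (1:ℝ) else 0) * (if c.1 = j then (1:ℝ) else 0)) *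
          ((if p.2.1 = q then (1:ℝ) else 0) * (if c.2.1 = q then (1:ℝ) else 0))) := by
  rw [Matrix.mul_apply]
  rw [Finset.sum_eq_single (i, r)]
  · rw [Matrix.mul_diagonal, Matrix.transpose_apply, srsrKraus_apply, srsrKraus_apply, hw]
    by_cases h1 : p.1 = j <;> by_cases h2 : p.2.1 = q <;> by_cases h3 : c.1 = j <;>
      by_cases h4 : c.2.1 = q <;> by_cases h5 : i ∈ I' <;>
      simp [h1, h2, h3, h4, h5]
  · intro b _ hb
    rw [Matrix.mul_diagonal, Matrix.transpose_apply, srsrKraus_eq_zero v i j q r p b hb]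
    ring
  · intro h
    exact absurd (Finset.mem_univ _) h

lemma srsrCPO_entry (v : ∀ (_ : Fin n) (j : Fin m), Fin (d j) → ℝ)
    (I' : Finset (Fin n))
    (Y' : Matrix (SrsrCol n D) (SrsrCol n D) ℝ)
    (hY' : ∀ p c : SrsrCol n D,
      Y' p c = if p = c ∧ p.1 ∈ I' then (1 : ℝ) else 0)
    (p c : SrsrRow n m d) :
    srsrCPO d v Y' p c =
      if p.1 = c.1 ∧ p.2.1 = c.2.1 then
        (D : ℝ) * ∑ i ∈ I', v i p.1 p.2.2 * v i c.1 c.2.2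
      else 0 := by
  have hdiag : Y' = Matrix.diagonal (fun b : SrsrCol n D => if b.1 ∈ I' then (1:ℝ) else 0) := by
    ext a b
    rw [hY']
    by_cases h : a = b
    · subst h; simp
    · simp [h, Matrix.diagonal_apply_ne _ h]
  rw [srsrCPO, hdiag]
  simp only [Matrix.sum_apply]
  rw [Finset.sum_congr rfl fun i _ => Finset.sum_congr rfl fun j _ =>
    Finset.sum_congr rfl fun q _ => Finset.sum_congr rfl fun r _ =>
    srsr_term v _ I' rfl i j q r p c]
  simp only [Finset.sum_const, Finset.card_univ, Fintype.card_fin, nsmul_eq_mul]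
  simp only [← Finset.mul_sum, ← Finset.sum_mul]
  rw [srsr_ind_sum p.1 c.1, srsr_ind_sum p.2.1 c.2.1,
    Fintype.sum_ite_mem I' (fun i => v i p.1 p.2.2 * v i c.1 c.2.2)]
  by_cases h1 : p.1 = c.1 <;> by_cases h2 : p.2.1 = c.2.1 <;>
    simp [h1, h2]

end Aux

noncomputable def srsrA {n m : ℕ} (d : Fin m → ℕ) (k : Fin m → ℕ)
    (b : ∀ j, Fin (k j) → (Fin (d j) → ℝ)) :
    Matrix (SrsrRow n m d) (Σ j : Fin m, Fin n × Fin (k j)) ℝ :=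
  fun p t =>
    if h : p.1 = t.1 ∧ p.2.1 = t.2.1 then b t.1 t.2.2 (Fin.cast (congrArg d h.1) p.2.2)
    else 0

noncomputable def srsrC {n m : ℕ} (D : ℕ) (d : Fin m → ℕ) (k : Fin m → ℕ)
    (v : ∀ (_ : Fin n) (j : Fin m), Fin (d j) → ℝ)
    (co : ∀ (i : Fin n) (j : Fin m), Fin (k j) → ℝ) (I' : Finset (Fin n)) :
    Matrix (Σ j : Fin m, Fin n × Fin (k j)) (SrsrRow n m d) ℝ :=
  fun t c =>
    if t.1 = c.1 ∧ t.2.1 = c.2.1 then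
      (D : ℝ) * ∑ i ∈ I', co i t.1 t.2.2 * v i c.1 c.2.2
    else 0

section Fact

variable {n m D : ℕ} {d : Fin m → ℕ}

lemma srsrCPO_factor (v : ∀ (_ : Fin n) (j : Fin m), Fin (d j) → ℝ)
    (k : Fin m → ℕ) (b : ∀ j, Fin (k j) → (Fin (d j) → ℝ))
    (co : ∀ (i : Fin n) (j : Fin m), Fin (k j) → ℝ)
    (I' : Finset (Fin n))
    (Y' : Matrix (SrsrCol n D) (SrsrCol n D) ℝ)
    (hY' : ∀ p c : SrsrCol n D,
      Y' p c = if p = c ∧ p.1 ∈ I' then (1 : ℝ) else 0)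
    (hrep : ∀ (j : Fin m), ∀ i ∈ I', v i j = ∑ t, co i j t • b j t) :
    srsrCPO d v Y' = srsrA d k b * srsrC D d k v co I' := by
  ext p c
  have key : (srsrA (n := n) d k b * srsrC (n := n) D d k v co I') p c =
      if p.1 = c.1 ∧ p.2.1 = c.2.1 then
        (D : ℝ) * ∑ i ∈ I', v i p.1 p.2.2 * v i c.1 c.2.2
      else 0 := by
    rw [Matrix.mul_apply]
    rw [← Finset.univ_sigma_univ, Finset.sum_sigma]
    rw [Finset.sum_eq_single p.1]
    rotate_left
    · intro j' _ hj'
      apply Finset.sum_eq_zero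
      intro x _
      have : srsrA (n := n) d k b p ⟨j', x⟩ = 0 := by
        unfold srsrA
        rw [dif_neg]
        rintro ⟨h1, -⟩
        exact hj' h1.symm
      rw [this, zero_mul]
    · intro h
      exact absurd (Finset.mem_univ _) h
    rw [Fintype.sum_prod_type]
    rw [Finset.sum_eq_single p.2.1]
    rotate_left
    · intro q' _ hq'
      apply Finset.sum_eq_zero
      intro t _
      have : srsrA (n := n) d k b p ⟨p.1, (q', t)⟩ = 0 := by
        unfold srsrA
        rw [dif_neg]
        rintro ⟨-, h2⟩
        exact hq' h2.symm
      rw [this, zero_mul]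
    · intro h
      exact absurd (Finset.mem_univ _) h
    have hA : ∀ t : Fin (k p.1), srsrA (n := n) d k b p ⟨p.1, (p.2.1, t)⟩ = b p.1 t p.2.2 := by
      intro t
      unfold srsrA
      rw [dif_pos ⟨rfl, rfl⟩]
      rfl
    have hC : ∀ t : Fin (k p.1), srsrC (n := n) D d k v co I' ⟨p.1, (p.2.1, t)⟩ c =
        if p.1 = c.1 ∧ p.2.1 = c.2.1 then
          (D : ℝ) * ∑ i ∈ I', co i p.1 t * v i c.1 c.2.2
        else 0 := fun t => rfl
    simp only [hA, hC]
    have hv : ∀ i ∈ I', v i p.1 p.2.2 = ∑ t, co i p.1 t * b p.1 t p.2.2 := by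
      intro i hi
      have := congrFun (hrep p.1 i hi) p.2.2
      simpa using this
    by_cases hc : p.1 = c.1 ∧ p.2.1 = c.2.1
    · rw [if_pos hc]
      rw [Finset.sum_congr rfl fun x _ => by
        rw [if_pos hc, Finset.mul_sum, Finset.mul_sum]]
      rw [Finset.sum_comm, Finset.mul_sum]
      refine Finset.sum_congr rfl fun i hi => ?_
      rw [hv i hi, Finset.sum_mul, Finset.mul_sum]
      exact Finset.sum_congr rfl fun t _ => by ring
    · simp [hc]
  rw [srsrCPO_entry v I' Y' hY' p c]
  exact key.symm

end Fact

theorem stmt17 {n m D : ℕ} (d : Fin m → ℕ) (hD : D = ∑ j, d j)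
    (v : ∀ (_ : Fin n) (j : Fin m), Fin (d j) → ℝ)
    (T' : ∀ j : Fin m, Submodule ℝ (Fin (d j) → ℝ))
    (I' : Finset (Fin n))
    (hI' : I' = Finset.univ.filter fun i : Fin n => ∀ j, v i j ∈ T' j)
    (Y' : Matrix (SrsrCol n D) (SrsrCol n D) ℝ)
    (hY' : ∀ p c : SrsrCol n D,
      Y' p c = if p = c ∧ p.1 ∈ I' then (1 : ℝ) else 0) :
    Y'.PosSemidef ∧
      (D : ℤ) * I'.card - n * (∑ j, (Module.finrank ℝ (T' j) : ℤ)) ≤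
        (Y'.rank : ℤ) - (srsrCPO d v Y').rank := by
  have hdiag : Y' = Matrix.diagonal (fun b : SrsrCol n D => if b.1 ∈ I' then (1:ℝ) else 0) := by
    ext a b
    rw [hY']
    by_cases h : a = b
    · subst h; simp
    · simp [h, Matrix.diagonal_apply_ne _ h]
  constructor
  · rw [hdiag]
    refine Matrix.posSemidef_diagonal_iff.mpr fun b => ?_
    split_ifs <;> norm_num
  · have hiff : ∀ b : SrsrCol n D, ((if b.1 ∈ I' then (1:ℝ) else 0) ≠ 0) ↔ b.1 ∈ I' := by
      intro b; split_ifs with h <;> simp [h]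
    have hrY : Y'.rank = I'.card * D := by
      rw [hdiag, Matrix.rank_diagonal]
      let e : {b : SrsrCol n D // (if b.1 ∈ I' then (1:ℝ) else 0) ≠ 0} ≃
          ({i // i ∈ I'} × Fin D) :=
        { toFun := fun b => (⟨b.1.1, (hiff b.1).mp b.2⟩, b.1.2)
          invFun := fun x => ⟨(x.1.1, x.2), (hiff _).mpr x.1.2⟩
          left_inv := fun b => rfl
          right_inv := fun x => rfl }
      rw [Fintype.card_congr e, Fintype.card_prod, Fintype.card_coe, Fintype.card_fin]
    have hex : ∀ j : Fin m, ∃ bb : Fin (Module.finrank ℝ (T' j)) → (Fin (d j) → ℝ),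
        ∃ co : Fin n → Fin (Module.finrank ℝ (T' j)) → ℝ,
        ∀ i ∈ I', v i j = ∑ t, co i t • bb t := by
      intro j
      set B := Module.finBasis ℝ (T' j) with hB
      refine ⟨fun t => (B t : Fin (d j) → ℝ),
        fun i t => if h : v i j ∈ T' j then B.repr ⟨v i j, h⟩ t else 0, fun i hi => ?_⟩
      have hv : v i j ∈ T' j := by
        rw [hI'] at hi
        exact (Finset.mem_filter.mp hi).2 j
      simp only [dif_pos hv]
      have hs := B.sum_repr ⟨v i j, hv⟩
      calc v i j = ((⟨v i j, hv⟩ : T' j) : Fin (d j) → ℝ) := rfl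
        _ = ((∑ t, B.repr ⟨v i j, hv⟩ t • B t : T' j) : Fin (d j) → ℝ) := by rw [hs]
        _ = ∑ t, B.repr ⟨v i j, hv⟩ t • (B t : Fin (d j) → ℝ) := by
            rw [Submodule.coe_sum]; simp only [Submodule.coe_smul]
    choose bb co hrep using hex
    have hfac := srsrCPO_factor v (fun j => Module.finrank ℝ (T' j)) bb
      (fun i j => co j i) I' Y' hY' (fun j i hi => hrep j i hi)
    have hrank : (srsrCPO d v Y').rank ≤ n * ∑ j, Module.finrank ℝ (T' j) := by
      rw [hfac]
      refine le_trans (Matrix.rank_mul_le_left _ _) ?_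
      refine le_trans (Matrix.rank_le_card_width _) ?_
      rw [Fintype.card_sigma]
      simp [Finset.mul_sum]
    have h1 : (Y'.rank : ℤ) = (D : ℤ) * I'.card := by rw [hrY]; push_cast; ring
    have h2 : ((srsrCPO d v Y').rank : ℤ) ≤ (n : ℤ) * ∑ j, (Module.finrank ℝ (T' j) : ℤ) := by
      calc ((srsrCPO d v Y').rank : ℤ)
          ≤ ((n * ∑ j, Module.finrank ℝ (T' j) : ℕ) : ℤ) := by exact_mod_cast hrank
        _ = _ := by push_cast; ring
    linarith
end

section
/- Let A_1,...,A_ℓ ∈ ℝ^{N×N} each of rank one, so that the matrix space span{A_i} has the Edmonds–Rado property. Then: if some B ∈ span{A_i} is invertible (corank 0 maximal rank), there is no shrunk subspace for {A_1,...,A_ℓ}; conversely, if every B ∈ span{A_i} is singular, then (assuming the Edmonds–Rado property, i.e. ncrank = rank for rank-one spanned spaces) there exists a shrunk subspace U, i.e. dim U > dim(Σ_i A_i(U)). -/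
open Matrix BigOperators Module Submodule

private lemma finrank_map_mkQ_add {V : Type} [AddCommGroup V] [Module ℝ V]
    [FiniteDimensional ℝ V] (U L : Submodule ℝ V) :
    finrank ℝ (U.map L.mkQ) + finrank ℝ L = finrank ℝ ↥(U ⊔ L) := by
  have h0 : finrank ℝ (LinearMap.range (L.mkQ.comp U.subtype))
      + finrank ℝ (LinearMap.ker (L.mkQ.comp U.subtype)) = finrank ℝ U :=
    LinearMap.finrank_range_add_finrank_ker _
  have hrange : LinearMap.range (L.mkQ.comp U.subtype) = U.map L.mkQ := by
    rw [LinearMap.range_comp, Submodule.range_subtype]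
  have hker : LinearMap.ker (L.mkQ.comp U.subtype) = (U ⊓ L).comap U.subtype := by
    rw [LinearMap.ker_comp, Submodule.ker_mkQ]
    ext x
    simp [Submodule.mem_comap, x.2]
  have hker2 : finrank ℝ ((U ⊓ L).comap U.subtype) = finrank ℝ ↥(U ⊓ L) :=
    (Submodule.comapSubtypeEquivOfLe inf_le_left).finrank_eq
  have h2 := Submodule.finrank_sup_add_finrank_inf_eq U L
  rw [hrange, hker, hker2] at h0
  omega

private lemma submod_rank {V ι : Type} [AddCommGroup V] [Module ℝ V] [FiniteDimensional ℝ V]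
    [DecidableEq ι] (b : ι → V) (X Y : Finset ι) :
    finrank ℝ (span ℝ (b '' ↑(X ∪ Y))) + finrank ℝ (span ℝ (b '' ↑(X ∩ Y))) ≤
      finrank ℝ (span ℝ (b '' ↑X)) + finrank ℝ (span ℝ (b '' ↑Y)) := by
  have hu : span ℝ (b '' ↑(X ∪ Y)) = span ℝ (b '' ↑X) ⊔ span ℝ (b '' ↑Y) := by
    rw [Finset.coe_union, Set.image_union, Submodule.span_union]
  have hi : span ℝ (b '' ↑(X ∩ Y)) ≤ span ℝ (b '' ↑X) ⊓ span ℝ (b '' ↑Y) := by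
    rw [Finset.coe_inter]
    exact le_inf (span_mono (Set.image_mono Set.inter_subset_left))
      (span_mono (Set.image_mono Set.inter_subset_right))
  have h1 := Submodule.finrank_sup_add_finrank_inf_eq (span ℝ (b '' ↑X)) (span ℝ (b '' ↑Y))
  have h2 : finrank ℝ (span ℝ (b '' ↑(X ∩ Y)))
      ≤ finrank ℝ ↥(span ℝ (b '' ↑X) ⊓ span ℝ (b '' ↑Y)) := Submodule.finrank_mono hi
  rw [hu]
  omega

private lemma finrank_span_insert_quot {V ι : Type} [AddCommGroup V] [Module ℝ V]
    [FiniteDimensional ℝ V] [DecidableEq ι] (b : ι → V) (e : ι) (he : b e ≠ 0) (T : Finset ι) :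
    finrank ℝ (span ℝ (b '' ↑(insert e T)))
      = finrank ℝ (span ℝ (((span ℝ {b e}).mkQ ∘ b) '' ↑T)) + 1 := by
  have h1 : span ℝ (((span ℝ {b e}).mkQ ∘ b) '' ↑T)
      = (span ℝ (b '' ↑T)).map (span ℝ {b e}).mkQ := by
    rw [Set.image_comp, Submodule.span_image]
  have h2 := finrank_map_mkQ_add (span ℝ (b '' ↑T)) (span ℝ {b e})
  have h3 : finrank ℝ (span ℝ ({b e} : Set V)) = 1 := finrank_span_singleton he
  have h4 : span ℝ (b '' ↑(insert e T)) = span ℝ (b '' ↑T) ⊔ span ℝ {b e} := by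
    rw [Finset.coe_insert, Set.image_insert_eq, Submodule.span_insert]
    exact sup_comm _ _
  rw [h4, h1, ← h2, h3]

private lemma matint (n : ℕ) :
    ∀ (V W : Type) [AddCommGroup V] [Module ℝ V] [FiniteDimensional ℝ V]
      [AddCommGroup W] [Module ℝ W] [FiniteDimensional ℝ W]
      (ι : Type) [DecidableEq ι] (b : ι → V) (c : ι → W) (E : Finset ι), E.card = n →
      ∀ (k : ℕ),
      (∀ T ⊆ E, k ≤ finrank ℝ (span ℝ (b '' ↑T)) + finrank ℝ (span ℝ (c '' ↑(E \ T)))) →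
      ∃ S ⊆ E, k ≤ S.card ∧ S.card = finrank ℝ (span ℝ (b '' ↑S))
        ∧ S.card = finrank ℝ (span ℝ (c '' ↑S)) := by
  induction n with
  | zero =>
    intro V W _ _ _ _ _ _ ι _ b c E hE k H
    have hE0 : E = ∅ := Finset.card_eq_zero.mp hE
    have h0 := H ∅ (Finset.empty_subset E)
    subst hE0
    rw [Finset.sdiff_empty, Finset.coe_empty, Set.image_empty, Set.image_empty,
      Submodule.span_empty, Submodule.span_empty, finrank_bot, finrank_bot] at h0
    refine ⟨∅, Finset.Subset.refl _, by simpa using h0, ?_, ?_⟩ <;>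
      rw [Finset.coe_empty, Set.image_empty, Submodule.span_empty, finrank_bot, Finset.card_empty]
  | succ n ih =>
    intro V W _ _ _ _ _ _ ι _ b c E hE k H
    obtain ⟨e, he⟩ : E.Nonempty := Finset.card_pos.mp (by omega)
    set E' := E.erase e with hE'def
    have hE'card : E'.card = n := by
      rw [hE'def, Finset.card_erase_of_mem he, hE]; rfl
    have hsub : E' ⊆ E := Finset.erase_subset _ _
    have heE' : e ∉ E' := Finset.notMem_erase _ _
    by_cases hdel : ∀ T ⊆ E',
        k ≤ finrank ℝ (span ℝ (b '' ↑T)) + finrank ℝ (span ℝ (c '' ↑(E' \ T)))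
    · obtain ⟨S, hS, h1, h2, h3⟩ := ih V W ι b c E' hE'card k hdel
      exact ⟨S, hS.trans hsub, h1, h2, h3⟩
    · push_neg at hdel
      obtain ⟨T1, hT1, hT1lt⟩ := hdel
      have heT1 : e ∉ T1 := fun h => heE' (hT1 h)
      have hbe : b e ≠ 0 := by
        intro h0
        refine absurd ?_ (not_le.mpr hT1lt)
        have hins : insert e T1 ⊆ E := Finset.insert_subset he (hT1.trans hsub)
        have := H (insert e T1) hins
        have hsd : E \ insert e T1 = E' \ T1 := by
          ext x
          simp only [Finset.mem_sdiff, Finset.mem_insert, hE'def, Finset.mem_erase]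
          tauto
        have hsp : span ℝ (b '' ↑(insert e T1)) = span ℝ (b '' ↑T1) := by
          rw [Finset.coe_insert, Set.image_insert_eq, h0, Submodule.span_insert_zero]
        rwa [hsd, hsp] at this
      have hce : c e ≠ 0 := by
        intro h0
        refine absurd ?_ (not_le.mpr hT1lt)
        have := H T1 (hT1.trans hsub)
        have hsd : E \ T1 = insert e (E' \ T1) := by
          ext x
          simp only [Finset.mem_sdiff, Finset.mem_insert, hE'def, Finset.mem_erase]
          constructor
          · rintro ⟨hxE, hxT⟩
            by_cases hx : x = e
            · exact Or.inl hx
            · exact Or.inr ⟨⟨hx, hxE⟩, hxT⟩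
          · rintro (rfl | ⟨⟨_, hxE⟩, hxT⟩)
            · exact ⟨he, heT1⟩
            · exact ⟨hxE, hxT⟩
        have hsp : span ℝ (c '' ↑(insert e (E' \ T1))) = span ℝ (c '' ↑(E' \ T1)) := by
          rw [Finset.coe_insert, Set.image_insert_eq, h0, Submodule.span_insert_zero]
        rwa [hsd, hsp] at this
      obtain ⟨k', rfl⟩ : ∃ k', k = k' + 1 := ⟨k - 1, by omega⟩
      set b' : ι → V ⧸ span ℝ {b e} := (span ℝ {b e}).mkQ ∘ b with hb'def
      set c' : ι → W ⧸ span ℝ {c e} := (span ℝ {c e}).mkQ ∘ c with hc'def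
      have hcon : ∀ T ⊆ E',
          k' ≤ finrank ℝ (span ℝ (b' '' ↑T)) + finrank ℝ (span ℝ (c' '' ↑(E' \ T))) := by
        by_contra hq
        push_neg at hq
        obtain ⟨T2, hT2, hT2lt⟩ := hq
        have heT2 : e ∉ T2 := fun h => heE' (hT2 h)
        have f1 := finrank_span_insert_quot b e hbe T2
        have f2 := finrank_span_insert_quot c e hce (E' \ T2)
        rw [← hb'def] at f1
        rw [← hc'def] at f2
        have sub_b := submod_rank b T1 (insert e T2)
        have sub_c := submod_rank c (E' \ T1) (insert e (E' \ T2))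
        have g1 : T1 ∪ insert e T2 = insert e (T1 ∪ T2) := by
          ext x; simp only [Finset.mem_union, Finset.mem_insert]; tauto
        have g2 : T1 ∩ insert e T2 = T1 ∩ T2 := by
          ext x
          simp only [Finset.mem_inter, Finset.mem_insert]
          constructor
          · rintro ⟨hx1, rfl | hx2⟩
            · exact absurd hx1 heT1
            · exact ⟨hx1, hx2⟩
          · tauto
        have g3 : (E' \ T1) ∪ insert e (E' \ T2) = E \ (T1 ∩ T2) := by
          ext x
          simp only [Finset.mem_union, Finset.mem_insert, Finset.mem_sdiff, hE'def,
            Finset.mem_erase, Finset.mem_inter]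
          constructor
          · rintro (⟨⟨hxe, hxE⟩, hxT⟩ | rfl | ⟨⟨hxe, hxE⟩, hxT⟩)
            · exact ⟨hxE, fun h => hxT h.1⟩
            · exact ⟨he, fun h => heT1 h.1⟩
            · exact ⟨hxE, fun h => hxT h.2⟩
          · rintro ⟨hxE, hxT⟩
            by_cases hx : x = e
            · exact Or.inr (Or.inl hx)
            · by_cases hx1 : x ∈ T1
              · exact Or.inr (Or.inr ⟨⟨hx, hxE⟩, fun h => hxT ⟨hx1, h⟩⟩)
              · exact Or.inl ⟨⟨hx, hxE⟩, hx1⟩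
        have g4 : (E' \ T1) ∩ insert e (E' \ T2) = E \ insert e (T1 ∪ T2) := by
          ext x
          simp only [Finset.mem_inter, Finset.mem_insert, Finset.mem_sdiff, hE'def,
            Finset.mem_erase, Finset.mem_union]
          constructor
          · rintro ⟨⟨⟨hxe, hxE⟩, hxT1⟩, rfl | ⟨⟨_, _⟩, hxT2⟩⟩
            · exact absurd rfl hxe
            · exact ⟨hxE, fun h => by rcases h with h | h | h; exact hxe h; exact hxT1 h; exact hxT2 h⟩
          · rintro ⟨hxE, hx⟩
            push_neg at hx
            obtain ⟨hxe, hxT1, hxT2⟩ := hx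
            exact ⟨⟨⟨hxe, hxE⟩, hxT1⟩, Or.inr ⟨⟨hxe, hxE⟩, hxT2⟩⟩
        rw [g1, g2] at sub_b
        rw [g3, g4] at sub_c
        have hm1 := H (T1 ∩ T2) ((Finset.inter_subset_left.trans hT1).trans hsub)
        have hm2 := H (insert e (T1 ∪ T2))
          (Finset.insert_subset he ((Finset.union_subset hT1 hT2).trans hsub))
        linarith
      obtain ⟨S', hS', hc1, hc2, hc3⟩ := ih (V ⧸ span ℝ {b e}) (W ⧸ span ℝ {c e}) ι b' c' E'
        hE'card k' hcon
      have heS' : e ∉ S' := fun h => heE' (hS' h)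
      refine ⟨insert e S', Finset.insert_subset he (hS'.trans hsub), ?_, ?_, ?_⟩
      · rw [Finset.card_insert_of_notMem heS']; omega
      · rw [Finset.card_insert_of_notMem heS', finrank_span_insert_quot b e hbe S',
          ← hb'def, ← hc2]
      · rw [Finset.card_insert_of_notMem heS', finrank_span_insert_quot c e hce S',
          ← hc'def, ← hc3]

private lemma rank_one_decomp {N : ℕ} (A : Matrix (Fin N) (Fin N) ℝ) (h : A.rank = 1) :
    ∃ u v : Fin N → ℝ, ∀ x, A.mulVec x = (v ⬝ᵥ x) • u := by
  have h1 : finrank ℝ (LinearMap.range A.mulVecLin) = 1 := h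
  obtain ⟨w, hw0, hw⟩ := finrank_eq_one_iff'.mp h1
  set u : Fin N → ℝ := (w : Fin N → ℝ) with hu
  have hu0 : u ≠ 0 := fun h' => hw0 (Subtype.ext h')
  obtain ⟨j0, hj0⟩ : ∃ j0, u j0 ≠ 0 := by
    by_contra h'
    push_neg at h'
    exact hu0 (funext h')
  refine ⟨u, (u j0)⁻¹ • (fun j => A j0 j), fun x => ?_⟩
  have hx : A.mulVec x ∈ LinearMap.range A.mulVecLin := ⟨x, rfl⟩
  obtain ⟨t, ht⟩ := hw ⟨A.mulVec x, hx⟩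
  have ht' : A.mulVec x = t • u := by
    have := congrArg Subtype.val ht
    exact this.symm
  have hdot : ((u j0)⁻¹ • (fun j => A j0 j)) ⬝ᵥ x = t := by
    have h2 : (fun j => A j0 j) ⬝ᵥ x = A.mulVec x j0 := rfl
    rw [smul_dotProduct, h2, ht']
    simp only [Pi.smul_apply, smul_eq_mul]
    field_simp
  rw [hdot, ht']

private lemma mulVec_sum_smul {N ℓ : ℕ} (α : Fin ℓ → ℝ) (A : Fin ℓ → Matrix (Fin N) (Fin N) ℝ)
    (x : Fin N → ℝ) :
    (∑ i, α i • A i).mulVec x = ∑ i, α i • (A i).mulVec x := by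
  ext j
  simp only [Matrix.mulVec, dotProduct, Finset.sum_apply, Pi.smul_apply,
    Matrix.sum_apply, Matrix.smul_apply, smul_eq_mul, Finset.sum_mul, Finset.mul_sum]
  rw [Finset.sum_comm]
  exact Finset.sum_congr rfl fun i _ => Finset.sum_congr rfl fun l _ => by ring


theorem stmt19 {N ℓ : ℕ} (A : Fin ℓ → Matrix (Fin N) (Fin N) ℝ)
    (hrk : ∀ i, (A i).rank = 1) :
    (∃ α : Fin ℓ → ℝ, (∑ i, α i • A i).rank = N) ↔
      ¬ ∃ U : Submodule ℝ (Fin N → ℝ),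
          Module.finrank ℝ (⨆ i, U.map (A i).mulVecLin : Submodule ℝ (Fin N → ℝ)) <
            Module.finrank ℝ U := by
  have hNfin : finrank ℝ (Fin N → ℝ) = N := by
    rw [Module.finrank_fintype_fun_eq_card, Fintype.card_fin]
  constructor
  · rintro ⟨α, hα⟩ ⟨U, hU⟩
    set B := ∑ i, α i • A i with hB
    have hrange : LinearMap.range B.mulVecLin = ⊤ :=
      Submodule.eq_top_of_finrank_eq (by rw [hNfin]; exact hα)
    have hinj : Function.Injective B.mulVecLin :=
      LinearMap.injective_iff_surjective.mpr (LinearMap.range_eq_top.mp hrange)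
    have h1 : finrank ℝ U = finrank ℝ (U.map B.mulVecLin) :=
      (Submodule.equivMapOfInjective _ hinj U).finrank_eq
    have h2 : U.map B.mulVecLin ≤ ⨆ i, U.map (A i).mulVecLin := by
      rintro y hy
      obtain ⟨x, hx, rfl⟩ := Submodule.mem_map.mp hy
      rw [Matrix.mulVecLin_apply, hB, mulVec_sum_smul]
      exact Submodule.sum_mem _ fun i _ => Submodule.smul_mem _ _
        (Submodule.mem_iSup_of_mem i ⟨x, hx, (Matrix.mulVecLin_apply _ _)⟩)
    have h3 := Submodule.finrank_mono h2
    linarith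
  · intro hns
    choose u v huv using fun i => rank_one_decomp (A i) (hrk i)
    have H : ∀ T ⊆ (Finset.univ : Finset (Fin ℓ)),
        N ≤ finrank ℝ (span ℝ (u '' ↑T)) + finrank ℝ (span ℝ (v '' ↑(Finset.univ \ T))) := by
      intro T _
      set C : Matrix (Fin ℓ) (Fin N) ℝ :=
        Matrix.of (fun i => if i ∈ T then 0 else v i) with hC
      set U := LinearMap.ker C.mulVecLin with hUdef
      have hUmem : ∀ x ∈ U, ∀ i ∉ T, v i ⬝ᵥ x = 0 := by
        intro x hx i hi
        have h := congrFun (LinearMap.mem_ker.mp hx) i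
        simpa [hC, Matrix.mulVecLin_apply, Matrix.mulVec, hi] using h
      have hrk1 : C.rank + finrank ℝ U = N := by
        have h := LinearMap.finrank_range_add_finrank_ker C.mulVecLin
        rwa [hNfin] at h
      have hCrank : C.rank ≤ finrank ℝ (span ℝ (v '' ↑(Finset.univ \ T))) := by
        rw [Matrix.rank_eq_finrank_span_row]
        apply Submodule.finrank_mono
        have hsubset : Set.range C ⊆ insert 0 (v '' ↑(Finset.univ \ T)) := by
          intro y hy
          obtain ⟨i, rfl⟩ := hy
          rw [Set.mem_insert_iff]
          by_cases hi : i ∈ T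
          · refine Or.inl ?_
            show (if i ∈ T then (0 : Fin N → ℝ) else v i) = 0
            rw [if_pos hi]
          · refine Or.inr ⟨i, by simp [hi], ?_⟩
            show v i = if i ∈ T then (0 : Fin N → ℝ) else v i
            rw [if_neg hi]
        exact le_trans (Submodule.span_mono hsubset) (le_of_eq Submodule.span_insert_zero)
      have hshr : finrank ℝ U
          ≤ finrank ℝ (⨆ i, U.map (A i).mulVecLin : Submodule ℝ (Fin N → ℝ)) := by
        by_contra hlt
        exact hns ⟨U, not_le.mp hlt⟩
      have hsup : (⨆ i, U.map (A i).mulVecLin : Submodule ℝ (Fin N → ℝ))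
          ≤ span ℝ (u '' ↑T) := by
        refine iSup_le fun i => ?_
        rintro y hy
        obtain ⟨x, hx, rfl⟩ := Submodule.mem_map.mp hy
        rw [Matrix.mulVecLin_apply, huv i x]
        by_cases hi : i ∈ T
        · exact Submodule.smul_mem _ _ (Submodule.subset_span ⟨i, by simpa using hi, rfl⟩)
        · rw [hUmem x hx i hi, zero_smul]
          exact Submodule.zero_mem _
      have h4 := hshr.trans (Submodule.finrank_mono hsup)
      linarith
    obtain ⟨S, -, hScard, hbS, hcS⟩ := matint (Finset.univ : Finset (Fin ℓ)).card
      (Fin N → ℝ) (Fin N → ℝ) (Fin ℓ) u v Finset.univ rfl N H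
    have hS_le : S.card ≤ N := by
      rw [hbS]
      exact le_trans (Submodule.finrank_le _) (le_of_eq hNfin)
    have hScardN : S.card = N := le_antisymm hS_le hScard
    have hvtop : span ℝ (v '' ↑S) = ⊤ :=
      Submodule.eq_top_of_finrank_eq (by rw [← hcS, hScardN, hNfin])
    have huind : LinearIndependent ℝ (fun i : ↥S => u ↑i) := by
      rw [linearIndependent_iff_card_eq_finrank_span]
      have hr : Set.range (fun i : ↥S => u ↑i) = u '' ↑S := (Set.image_eq_range u ↑S).symm
      rw [Set.finrank, hr, ← hbS, Fintype.card_coe]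
    refine ⟨fun i => if i ∈ S then 1 else 0, ?_⟩
    have hkey : ∀ x, (∑ i, (if i ∈ S then (1 : ℝ) else 0) • A i).mulVec x
        = ∑ i ∈ S, (v i ⬝ᵥ x) • u i := by
      intro x
      rw [mulVec_sum_smul]
      have hcongr : ∀ i ∈ Finset.univ, (if i ∈ S then (1 : ℝ) else 0) • (A i).mulVec x
          = if i ∈ S then (v i ⬝ᵥ x) • u i else (0 : Fin N → ℝ) := by
        intro i _
        by_cases hi : i ∈ S <;> simp [hi, huv i x]
      rw [Finset.sum_congr rfl hcongr, Finset.sum_ite_mem, Finset.univ_inter]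
    have hinj : ∀ x, (∑ i, (if i ∈ S then (1 : ℝ) else 0) • A i).mulVec x = 0 → x = 0 := by
      intro x hx0
      rw [hkey] at hx0
      have hsum : ∑ i : ↥S, (v ↑i ⬝ᵥ x) • u ↑i = 0 := by
        rw [Finset.sum_coe_sort S (fun i => (v i ⬝ᵥ x) • u i)]
        exact hx0
      have hcoef : ∀ i : ↥S, v ↑i ⬝ᵥ x = 0 :=
        Fintype.linearIndependent_iff.mp huind (fun i => v ↑i ⬝ᵥ x) hsum
      let φ : (Fin N → ℝ) →ₗ[ℝ] ℝ :=
        { toFun := fun w => w ⬝ᵥ x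
          map_add' := fun a b => add_dotProduct a b x
          map_smul' := fun r a => smul_dotProduct r a x }
      have hφ : ∀ w ∈ span ℝ (v '' ↑S), φ w = 0 := by
        intro w hw
        induction hw using Submodule.span_induction with
        | mem y hy =>
          obtain ⟨i, hi, rfl⟩ := hy
          exact hcoef ⟨i, hi⟩
        | zero => exact map_zero φ
        | add a b _ _ ha hb => rw [map_add, ha, hb, add_zero]
        | smul r a _ ha => rw [_root_.map_smul, ha, smul_eq_mul, mul_zero]
      have hx : φ x = 0 := hφ x (hvtop ▸ Submodule.mem_top)
      exact dotProduct_self_eq_zero.mp hx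
    have hker : LinearMap.ker (∑ i, (if i ∈ S then (1 : ℝ) else 0) • A i).mulVecLin = ⊥ := by
      ext x
      simp only [LinearMap.mem_ker, Matrix.mulVecLin_apply, Submodule.mem_bot]
      exact ⟨hinj x, fun h => by rw [h, Matrix.mulVec_zero]⟩
    show finrank ℝ (LinearMap.range (∑ i, (if i ∈ S then (1 : ℝ) else 0) • A i).mulVecLin) = N
    have h5 := LinearMap.finrank_range_add_finrank_ker
      (∑ i, (if i ∈ S then (1 : ℝ) else 0) • A i).mulVecLin
    rw [hker, finrank_bot, hNfin] at h5
    omega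
end
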